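/- arXiv:1808.10162 — 11 statements merged into one kernel-verified Lean document; each statement's English description precedes it below -/
import Mathlib

section
/- Let D ⊆ ℝⁿ be a closed convex cone with D ∩ (−D) = {0}. Then there exists a linear form ω: ℝⁿ → ℝ such that D ∩ ker(ω) = {0} and ω(x) ≥ 0 for all x ∈ D; in particular ω(x) > 0 for all nonzero x ∈ D. -/
open scoped InnerProductSpace

/-- A closed pointed convex cone `D ⊆ ℝⁿ` admits a linear form `ω`
with `D ∩ ker ω = {0}` and `ω ≥ 0` on `D`; in particular `ω > 0` on `D \ {0}`. -/
theorem separating_linear_form (n : ℕ) (D : Set (Fin n → ℝ))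
    (hclosed : IsClosed D) (hconv : Convex ℝ D)
    (hcone : ∀ x ∈ D, ∀ r : ℝ, 0 ≤ r → r • x ∈ D)
    (hpointed : {x | x ∈ D ∧ -x ∈ D} = {0}) :
    ∃ ω : (Fin n → ℝ) →ₗ[ℝ] ℝ,
      (∀ x ∈ D, ω x = 0 → x = 0) ∧ (∀ x ∈ D, 0 ≤ ω x) ∧
      (∀ x ∈ D, x ≠ 0 → 0 < ω x) := by
  set H := EuclideanSpace ℝ (Fin n)
  set e : (Fin n → ℝ) ≃L[ℝ] H := (EuclideanSpace.equiv (Fin n) ℝ).symm with he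
  set D' : Set H := e '' D with hD'
  have h0D : (0 : Fin n → ℝ) ∈ D := by
    have : (0 : Fin n → ℝ) ∈ {x | x ∈ D ∧ -x ∈ D} := by rw [hpointed]; rfl
    exact this.1
  have hD'closed : IsClosed D' := (e.toHomeomorph.isClosed_image).2 hclosed
  have hconeD' : ∀ x ∈ D', ∀ r : ℝ, 0 ≤ r → r • x ∈ D' := by
    rintro _ ⟨x, hx, rfl⟩ r hr
    exact ⟨r • x, hcone x hx r hr, by simp⟩
  have haddD' : ∀ x ∈ D', ∀ y ∈ D', x + y ∈ D' := by
    rintro _ ⟨x, hx, rfl⟩ _ ⟨y, hy, rfl⟩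
    refine ⟨x + y, ?_, by simp⟩
    have hmid : (1/2 : ℝ) • x + (1/2 : ℝ) • y ∈ D :=
      hconv hx hy (by norm_num) (by norm_num) (by norm_num)
    have := hcone _ hmid 2 (by norm_num)
    convert this using 1
    rw [smul_add, smul_smul, smul_smul]; norm_num
  set K : ConvexCone ℝ H :=
    { carrier := D'
      smul_mem' := fun c hc x hx => hconeD' x hx c hc.le
      add_mem' := fun x hx y hy => haddD' x hx y hy } with hK
  have hKmem : ∀ z : H, z ∈ K ↔ z ∈ D' := fun z => Iff.rfl
  have hne : (K : Set H).Nonempty := ⟨e 0, ⟨0, h0D, rfl⟩⟩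
  -- separation for each nonzero point of D'
  have hsep : ∀ x : H, x ∈ D' → x ≠ 0 →
      ∃ y : H, (∀ z ∈ D', 0 ≤ ⟪z, y⟫_ℝ) ∧ 0 < ⟪x, y⟫_ℝ := by
    intro x hx hx0
    have hnmem : -x ∉ K := by
      rintro ⟨w, hw, hww⟩
      obtain ⟨v, hv, rfl⟩ := hx
      have hveq : w = -v := by
        apply e.injective; rw [hww]; simp
      have : v ∈ {x | x ∈ D ∧ -x ∈ D} := ⟨hv, hveq ▸ hw⟩
      rw [hpointed, Set.mem_singleton_iff] at this
      subst this
      exact hx0 (by simp)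
    obtain ⟨y, hy1, hy2⟩ :=
      ProperCone.hyperplane_separation' (x₀ := -x)
        (C := { carrier := D', add_mem' := fun {a b} ha hb => haddD' a ha b hb,
                zero_mem' := ⟨0, h0D, map_zero e⟩,
                smul_mem' := fun (c : NNReal) z hz => hconeD' z hz (c : ℝ) c.2,
                isClosed' := hD'closed }) hnmem
    refine ⟨y, hy1, ?_⟩
    rw [inner_neg_left] at hy2
    linarith
  set S : Set H := D' ∩ Metric.sphere 0 1 with hS
  have hScomp : IsCompact S := (isCompact_sphere 0 1).inter_left hD'closed
  -- choose separating functionals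
  choose! y hy1 hy2 using hsep
  have hcover : S ⊆ ⋃ p ∈ S, {z : H | 0 < ⟪z, y p⟫_ℝ} := by
    intro p hp
    have hp0 : p ≠ 0 := by
      intro h; rw [h] at hp; simpa using hp.2
    exact Set.mem_biUnion hp (hy2 p hp.1 hp0)
  obtain ⟨t, ht⟩ := hScomp.elim_finite_subcover_image
    (fun p _ => isOpen_lt continuous_const ((innerSL ℝ).flip (y p)).continuous) hcover
  obtain ⟨htS, htfin, htcov⟩ := ht
  set Y : H := ∑ p ∈ htfin.toFinset, y p with hY
  have hptD' : ∀ p, p ∈ S → p ∈ D' ∧ p ≠ 0 := by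
    intro p hp
    exact ⟨hp.1, by intro h; have := hp.2; rw [h, Metric.mem_sphere, dist_self] at this; norm_num at this⟩
  have hnonneg : ∀ x ∈ D, 0 ≤ ⟪Y, e x⟫_ℝ := by
    intro x hx
    rw [hY, sum_inner]
    refine Finset.sum_nonneg fun p hp => ?_
    obtain ⟨hpD, hp0⟩ := hptD' p (htS (htfin.mem_toFinset.1 hp))
    rw [real_inner_comm]
    exact hy1 p hpD hp0 (e x) ⟨x, hx, rfl⟩
  have hpos : ∀ x ∈ D, x ≠ 0 → 0 < ⟪Y, e x⟫_ℝ := by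
    intro x hx hx0
    have hex0 : e x ≠ 0 := fun h => hx0 (by simpa using e.injective (h.trans (map_zero e).symm))
    set u : H := ‖e x‖⁻¹ • e x with hu
    have hu0 : (0:ℝ) < ‖e x‖ := norm_pos_iff.2 hex0
    have huS : u ∈ S := by
      constructor
      · exact hconeD' (e x) ⟨x, hx, rfl⟩ _ (inv_nonneg.2 hu0.le)
      · exact mem_sphere_zero_iff_norm.2 (by rw [hu, norm_smul, norm_inv, norm_norm, inv_mul_cancel₀ hu0.ne'])
    obtain ⟨p, hpt, hpu⟩ := Set.mem_iUnion₂.1 (htcov huS)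
    have hpos1 : 0 < ⟪e x, y p⟫_ℝ := by
      have : 0 < ⟪u, y p⟫_ℝ := hpu
      rw [hu, inner_smul_left] at this
      rw [starRingEnd_apply, star_trivial] at this
      nlinarith [inv_pos.2 hu0]
    rw [hY, sum_inner]
    refine Finset.sum_pos' (fun q hq => ?_) ⟨p, htfin.mem_toFinset.2 hpt, ?_⟩
    · obtain ⟨hqD, hq0⟩ := hptD' q (htS (htfin.mem_toFinset.1 hq))
      rw [real_inner_comm]
      exact hy1 q hqD hq0 (e x) ⟨x, hx, rfl⟩
    · rw [real_inner_comm]; exact hpos1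
  refine ⟨(((innerSL ℝ) Y).comp (e : (Fin n → ℝ) →L[ℝ] H)).toLinearMap, ?_, ?_, ?_⟩
  · intro x hx hωx
    by_contra hx0
    exact absurd hωx (hpos x hx hx0).ne'
  · intro x hx
    exact hnonneg x hx
  · intro x hx hx0
    exact hpos x hx hx0
end

section
/- Let A be a finitely generated abelian group, C ⊆ A a strongly strict submonoid, Z = C ∩ (−C) the subgroup of quasi-zero elements, D ⊆ A ⊗ ℝ a closed cone with D ∩ (−D) = {0} and C ⊆ ι_ℝ⁻¹(D), and ω a linear form on A ⊗ ℝ with ω > 0 on D \ {0} and D ∩ ker ω = {0}. Then inf{ω(ι_ℝ(x)) : x ∈ C \ Z} > 0. -/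
/-- For a strongly strict submonoid `C` of a finitely generated
abelian group `A`, with `Z = C ∩ (−C)`, a closed pointed convex cone
`D ⊆ A ⊗ ℝ` containing `ι_ℝ(C)` and a separating linear form `ω`,
the infimum of `ω(ι_ℝ(x))` over `x ∈ C \ Z` is strictly positive. -/
theorem inf_pos_on_cone (A : Type*) [AddCommGroup A] [AddGroup.FG A]
    (V : Type*) [NormedAddCommGroup V] [NormedSpace ℝ V]
    (ι : A →ₗ[ℤ] V) (hbc : IsBaseChange ℝ ι)
    (C : AddSubmonoid A)
    (D : Set V) (hDclosed : IsClosed D) (hDconv : Convex ℝ D)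
    (hDcone : ∀ v ∈ D, ∀ r : ℝ, 0 ≤ r → r • v ∈ D)
    (hDpointed : ∀ v ∈ D, -v ∈ D → v = 0)
    (hCD : ∀ a ∈ C, ι a ∈ D)
    (ω : V →ₗ[ℝ] ℝ) (hωpos : ∀ v ∈ D, 0 ≤ ω v)
    (hωker : ∀ v ∈ D, ω v = 0 → v = 0) :
    ∃ ε : ℝ, 0 < ε ∧ ∀ x ∈ C, ¬(x ∈ C ∧ -x ∈ C) → ε ≤ ω (ι x) := by
  classical
  obtain ⟨n, κ, fκ, p, hp, e, ⟨ψ⟩⟩ := AddCommGroup.equiv_free_prod_directSum_zmod A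
  haveI := fκ
  haveI : ∀ i, NeZero (p i ^ e i) := fun i => ⟨pow_ne_zero _ (hp i).pos.ne'⟩
  set T := DirectSum κ (fun i => ZMod (p i ^ e i)) with hTdef
  haveI : Finite T := Finite.of_equiv _ (DFinsupp.equivFunOnFintype (ι := κ)).symm
  -- `ι` kills torsion-only elements
  have hkill : ∀ x : A, (ψ x).1 = 0 → ι x = 0 := by
    intro x hx
    set k := addOrderOf (ψ x).2 with hk
    have hkpos : 0 < k := addOrderOf_pos _
    have hkx : k • x = 0 := by
      apply ψ.injective
      rw [map_nsmul, map_zero]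
      refine Prod.ext ?_ ?_
      · show k • (ψ x).1 = 0
        rw [hx, smul_zero]
      · show k • (ψ x).2 = 0
        exact addOrderOf_nsmul_eq_zero _
    have h1 : (k : ℝ) • ι x = 0 := by
      rw [Nat.cast_smul_eq_nsmul, ← map_nsmul, hkx, map_zero]
    rcases smul_eq_zero.mp h1 with h | h
    · exact absurd h (by exact_mod_cast hkpos.ne')
    · exact h
  -- projections as real functionals
  let π : Fin n → (A →ₗ[ℤ] ℝ) := fun i =>
    ((Int.castAddHom ℝ).comp ((Finsupp.applyAddHom i).comp
      ((AddMonoidHom.fst _ _).comp ψ.toAddMonoidHom))).toIntLinearMap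
  have hπ : ∀ (i : Fin n) (x : A), π i x = (((ψ x).1 i : ℤ) : ℝ) := fun _ _ => rfl
  let f : Fin n → (V →ₗ[ℝ] ℝ) := fun i => hbc.lift (π i)
  have hf : ∀ (i : Fin n) (x : A), f i (ι x) = (((ψ x).1 i : ℤ) : ℝ) := fun i x =>
    (hbc.lift_eq (π i) x).trans (hπ i x)
  -- the lattice basis
  let a : Fin n → A := fun i => ψ.symm (Finsupp.single i 1, 0)
  let b : Fin n → V := fun i => ι (a i)
  have hψa : ∀ i : Fin n, ψ (a i) = (Finsupp.single i 1, 0) := fun i => ψ.apply_symm_apply _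
  have hfb : ∀ i j : Fin n, f i (b j) = if j = i then 1 else 0 := by
    intro i j
    rw [show f i (b j) = (((ψ (a j)).1 i : ℤ) : ℝ) from hf i (a j), hψa j]
    simp [Finsupp.single_apply]
  have hb_ind : LinearIndependent ℝ b := by
    rw [Fintype.linearIndependent_iff]
    intro g hg i
    have h1 := congrArg (f i) hg
    rw [map_sum, map_zero] at h1
    simp only [map_smul, smul_eq_mul, hfb, mul_ite, mul_one, mul_zero] at h1
    simpa using h1
  -- every ι x is in the ℤ-span of b
  have hmem : ∀ x : A, ι x ∈ Submodule.span ℤ (Set.range b) := by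
    intro x
    have hdec : ι x = ι (ψ.symm ((ψ x).1, 0)) + ι (ψ.symm (0, (ψ x).2)) := by
      rw [← map_add, ← map_add]
      congr 1
      apply ψ.injective
      rw [map_add]
      simp [ψ.apply_symm_apply]
    have hzero : ι (ψ.symm (0, (ψ x).2)) = 0 := by
      apply hkill
      rw [ψ.apply_symm_apply]
    have hsum : ι (ψ.symm ((ψ x).1, 0)) = ∑ i, ((ψ x).1 i) • b i := by
      have h0 : ((ψ x).1, (0:T)) = ∑ i, ((ψ x).1 i) • ((Finsupp.single i 1 : Fin n →₀ ℤ), (0:T)) := by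
        refine Prod.ext ?_ ?_
        · show (ψ x).1 = (∑ i, ((ψ x).1 i) • ((Finsupp.single i 1 : Fin n →₀ ℤ), (0:T))).1
          rw [Prod.fst_sum]
          simp only [Prod.smul_fst, Finsupp.smul_single, smul_eq_mul, mul_one]
          exact (Finsupp.univ_sum_single _).symm
        · show (0:T) = (∑ i, ((ψ x).1 i) • ((Finsupp.single i 1 : Fin n →₀ ℤ), (0:T))).2
          rw [Prod.snd_sum]
          simp
      rw [h0, map_sum, map_sum]
      refine Finset.sum_congr rfl fun i _ => ?_
      rw [map_zsmul, map_zsmul]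
    rw [hdec, hzero, add_zero, hsum]
    exact Submodule.sum_mem _ fun i _ =>
      Submodule.smul_mem _ _ (Submodule.subset_span ⟨i, rfl⟩)
  -- b spans V over ℝ
  have hb_span : ⊤ ≤ Submodule.span ℝ (Set.range b) := by
    rintro v -
    obtain ⟨w, rfl⟩ := hbc.equiv.surjective v
    induction w using TensorProduct.induction_on with
    | zero => simp only [map_zero]; exact Submodule.zero_mem _
    | tmul r x =>
      rw [hbc.equiv_tmul]
      exact Submodule.smul_mem _ _ (Submodule.span_subset_span ℤ ℝ _ (hmem x))
    | add u w hu hw =>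
      rw [map_add]
      exact Submodule.add_mem _ hu hw
  let B : Module.Basis (Fin n) ℝ V := Module.Basis.mk hb_ind hb_span
  haveI : FiniteDimensional ℝ V := Module.Finite.of_basis B
  haveI hdisc : DiscreteTopology (Submodule.span ℤ (Set.range b)) := by
    have hbB : Set.range b = Set.range ⇑B := by rw [Module.Basis.coe_mk]
    rw [hbB]
    infer_instance
  -- discreteness radius
  obtain ⟨r, hr, hrball⟩ :
      ∃ r > (0:ℝ), ∀ w ∈ Submodule.span ℤ (Set.range b), ‖w‖ < r → w = 0 := by
    set L := Submodule.span ℤ (Set.range b)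
    have h2 : ({0} : Set L) ∈ nhds (0 : L) := by
      rw [nhds_discrete]
      exact Filter.mem_pure.mpr rfl
    rw [nhds_subtype] at h2
    obtain ⟨U, hU, hUsub⟩ := Filter.mem_comap.mp h2
    obtain ⟨s, hs, hball⟩ := Metric.mem_nhds_iff.mp hU
    refine ⟨s, hs, fun w hw hws => ?_⟩
    have : (⟨w, hw⟩ : L) ∈ Subtype.val ⁻¹' U := by
      apply hball
      simpa [Metric.mem_ball] using hws
    have := hUsub this
    exact congrArg Subtype.val this
  haveI : ProperSpace V := FiniteDimensional.proper ℝ V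
  have hωc : Continuous ω := ω.continuous_of_finiteDimensional
  -- small ω on D forces small norm
  obtain ⟨δ, hδ, hδball⟩ : ∃ δ > (0:ℝ), ∀ v ∈ D, ω v < δ → ‖v‖ < r := by
    have hscale : ∀ v ∈ D, r ≤ ‖v‖ → (r / ‖v‖) • v ∈ D ∩ Metric.sphere (0:V) r := by
      intro v hv hge
      have hvpos : (0:ℝ) < ‖v‖ := lt_of_lt_of_le hr hge
      refine ⟨hDcone v hv _ (div_nonneg hr.le hvpos.le), ?_⟩
      simp only [Metric.mem_sphere, dist_zero_right, norm_smul, Real.norm_eq_abs,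
        abs_of_nonneg (div_nonneg hr.le hvpos.le)]
      field_simp
    by_cases hS : (D ∩ Metric.sphere (0:V) r).Nonempty
    · obtain ⟨u, huS, humin⟩ :=
        ((isCompact_sphere (0:V) r).inter_left hDclosed).exists_isMinOn hS hωc.continuousOn
      have hune : u ≠ 0 := by
        intro h0
        have := huS.2
        rw [h0] at this
        simp only [Metric.mem_sphere, dist_zero_right, norm_zero] at this
        exact hr.ne this
      have hδpos : 0 < ω u := by
        rcases (hωpos u huS.1).lt_or_eq with h | h
        · exact h
        · exact absurd (hωker u huS.1 h.symm) hune
      refine ⟨ω u, hδpos, fun v hv hvδ => ?_⟩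
      by_contra hge
      push_neg at hge
      have hvpos : (0:ℝ) < ‖v‖ := lt_of_lt_of_le hr hge
      have hle := isMinOn_iff.mp humin _ (hscale v hv hge)
      have h2 : ω ((r / ‖v‖) • v) ≤ ω v := by
        rw [map_smul, smul_eq_mul]
        exact mul_le_of_le_one_left (hωpos v hv) (div_le_one_of_le₀ hge hvpos.le)
      exact absurd (hle.trans_lt (h2.trans_lt hvδ)) (lt_irrefl _)
    · refine ⟨1, one_pos, fun v hv _ => ?_⟩
      by_contra hge
      push_neg at hge
      exact hS ⟨_, hscale v hv hge⟩
  refine ⟨δ, hδ, fun x hxC hxZ => ?_⟩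
  by_contra hlt
  push_neg at hlt
  have h1 : ‖ι x‖ < r := hδball _ (hCD x hxC) hlt
  have h2 : ι x = 0 := hrball _ (hmem x) h1
  have hy0 : (ψ x).1 = 0 := by
    ext i
    have h3 := hf i x
    rw [h2, map_zero] at h3
    exact_mod_cast h3.symm
  set k := addOrderOf (ψ x).2 with hk
  have hk1 : 1 ≤ k := addOrderOf_pos _
  have hkx : k • x = 0 := by
    apply ψ.injective
    rw [map_nsmul, map_zero]
    refine Prod.ext ?_ ?_
    · show k • (ψ x).1 = 0
      rw [hy0, smul_zero]
    · show k • (ψ x).2 = 0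
      exact addOrderOf_nsmul_eq_zero _
  have hneg : -x ∈ C := by
    have hsum : (k - 1) • x + x = 0 := by
      rw [← succ_nsmul x (k - 1), Nat.sub_add_cancel hk1, hkx]
    have h3 : (k - 1) • x ∈ C := AddSubmonoid.nsmul_mem C hxC _
    rwa [show -x = (k - 1) • x from neg_eq_of_add_eq_zero_left hsum]
  exact hxZ ⟨hxC, hneg⟩
end

section
/- Let (A,C) be a preordered abelian group, Z the subgroup of quasi-zero elements of C, A' = A/Z, C' = C/Z, and q: A → A' the quotient map. Then: (1) for any multifiltration F on a finite dimensional vector space E indexed by (A,C), F = Res^q(Ind_q(F)); (2) for any multifiltration F indexed by (A',C'), F = Ind_q(Res^q(F)). -/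
section MultifiltrationDefs

variable {A : Type*} [AddCommGroup A]

/-- The up-closure `K̃ = {λ | ∃ μ ∈ K, μ ≤ λ}` of a subset with respect to the
preorder defined by the submonoid `C`. -/
def mfTilde (C : AddSubmonoid A) (K : Set A) : Set A := {l : A | ∃ m ∈ K, l - m ∈ C}

variable {k E : Type*} [Field k] [AddCommGroup E] [Module k E]

/-- `F` is a decreasing multifiltration indexed by `(A, C)`. -/
def mfIsFilt (C : AddSubmonoid A) (F : A → Submodule k E) : Prop :=
  ∀ l m : A, m - l ∈ C → F m ≤ F l

/-- Exhaustive: `E = Σ_λ F^λ E`. -/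
def mfExhaustive (F : A → Submodule k E) : Prop := (⨆ l, F l) = ⊤

/-- `F^K E = Σ_{λ ∈ K} F^λ E`. -/
def mfPiece (F : A → Submodule k E) (K : Set A) : Submodule k E := ⨆ l ∈ K, F l

/-- Separated: for each family of subsets whose up-closures have empty
intersection, the intersection of the corresponding pieces is zero. -/
def mfSeparated (C : AddSubmonoid A) (F : A → Submodule k E) : Prop :=
  ∀ 𝒦 : Set (Set A), (⋂ K ∈ 𝒦, mfTilde C K) = ∅ → (⨅ K ∈ 𝒦, mfPiece F K) = ⊥

/-- Chain-separated: every infinite strictly increasing chain `λ₁ < λ₂ < ⋯`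
(`λ < μ` meaning `μ - λ ∈ C` and `λ - μ ∉ C`) eventually has `F^{λᵢ} E = 0`. -/
def mfChainSeparated (C : AddSubmonoid A) (F : A → Submodule k E) : Prop :=
  ∀ l : ℕ → A, (∀ i, l (i + 1) - l i ∈ C ∧ l i - l (i + 1) ∉ C) →
    ∃ i₀ : ℕ, ∀ i ≥ i₀, F (l i) = ⊥

/-- Regular: `F^{K₁}E ∩ F^{K₂}E = F^{K̃₁ ∩ K̃₂}E` for all subsets `K₁, K₂`. -/
def mfRegular (C : AddSubmonoid A) (F : A → Submodule k E) : Prop :=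
  ∀ K₁ K₂ : Set A, mfPiece F K₁ ⊓ mfPiece F K₂ = mfPiece F (mfTilde C K₁ ∩ mfTilde C K₂)

/-- `λ` is a jump point: `F^λ E` strictly contains `Σ_{μ > λ} F^μ E`. -/
def mfJump (C : AddSubmonoid A) (F : A → Submodule k E) (l : A) : Prop :=
  ¬ F l ≤ ⨆ (m : A) (_ : m - l ∈ C ∧ l - m ∉ C), F m

end MultifiltrationDefs

section IndRes

variable {A A' : Type*} [AddCommGroup A] [AddCommGroup A']
  {k E : Type*} [Field k] [AddCommGroup E] [Module k E]

/-- The induced multifiltration `Ind_φ(F)^λ E = Σ_{μ : λ ≤ φ(μ)} F^μ E`. -/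
def mfInd (C' : AddSubmonoid A') (φ : A →+ A') (F : A → Submodule k E) :
    A' → Submodule k E :=
  fun l => ⨆ (m : A) (_ : φ m - l ∈ C'), F m

/-- The restricted multifiltration `Res^φ(F)^λ E = F^{φ(λ)} E`. -/
def mfRes (φ : A →+ A') (F : A' → Submodule k E) : A → Submodule k E := fun l => F (φ l)

end IndRes

/-- With `Z = C ∩ (−C)` and `q : A → A/Z` the quotient map:
(1) `F = Res^q (Ind_q F)` for every multifiltration `F` indexed by `(A, C)`;
(2) `F = Ind_q (Res^q F)` for every multifiltration indexed by `(A/Z, C/Z)`. -/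
theorem res_ind_quotient {k : Type*} [Field k] {A : Type*} [AddCommGroup A]
    (C : AddSubmonoid A) (Z : AddSubgroup A)
    (hZ : (Z : Set A) = {a : A | a ∈ C ∧ -a ∈ C})
    {E : Type*} [AddCommGroup E] [Module k E] [FiniteDimensional k E] :
    (∀ F : A → Submodule k E, mfIsFilt C F →
      ∀ l : A, F l =
        mfRes (QuotientAddGroup.mk' Z)
          (mfInd (AddSubmonoid.map (QuotientAddGroup.mk' Z) C)
            (QuotientAddGroup.mk' Z) F) l) ∧
    (∀ F : A ⧸ Z → Submodule k E,
      mfIsFilt (AddSubmonoid.map (QuotientAddGroup.mk' Z) C) F →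
      ∀ l : A ⧸ Z, F l =
        mfInd (AddSubmonoid.map (QuotientAddGroup.mk' Z) C)
          (QuotientAddGroup.mk' Z) (mfRes (QuotientAddGroup.mk' Z) F) l) := by
  constructor
  · intro F hF l
    apply le_antisymm
    · exact le_iSup_of_le l (le_iSup_of_le (by simpa using ⟨0, C.zero_mem, Z.zero_mem⟩) le_rfl)
    · simp only [mfRes, mfInd]
      apply iSup_le; intro m; apply iSup_le; intro hm
      obtain ⟨c, hc, hqc⟩ := hm
      apply hF
      have hz : m - l - c ∈ Z := by
        rw [← QuotientAddGroup.eq_zero_iff]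
        show (QuotientAddGroup.mk' Z) (m - l - c) = 0
        rw [map_sub, map_sub, hqc]
        abel
      have hzC : m - l - c ∈ C := ((hZ ▸ hz : _ ∈ {a : A | a ∈ C ∧ -a ∈ C})).1
      have := C.add_mem hzC hc
      simpa using this
  · intro F hF l
    apply le_antisymm
    · obtain ⟨m, hm⟩ := QuotientAddGroup.mk'_surjective Z l
      exact le_iSup_of_le m (le_iSup_of_le (by simpa [hm] using ⟨0, C.zero_mem, Z.zero_mem⟩) (by simp [mfRes, hm]))
    · apply iSup_le; intro m; apply iSup_le; intro hm
      exact hF _ _ hm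
end

section
/- Let A be a finitely generated abelian group, C ⊆ A a submonoid with quasi-zero subgroup Z such that C/Z is a strongly strict submonoid of A/Z. Let (E,F) be a multifiltration on a finite dimensional vector space E indexed by (A,C). If F is separated, then F is chain-separated. -/
/-- In a finite-dimensional normed space, the "order interval" `D ∩ (w - D)` of a
closed pointed cone `D` is bounded. -/
lemma mfAux_cone_bounded {V : Type*} [NormedAddCommGroup V] [NormedSpace ℝ V]
    [FiniteDimensional ℝ V] {D : Set V} (hDclosed : IsClosed D)
    (hDcone : ∀ v ∈ D, ∀ r : ℝ, 0 ≤ r → r • v ∈ D)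
    (hDpointed : ∀ v ∈ D, -v ∈ D → v = 0) (w : V) :
    ∃ R : ℝ, ∀ x ∈ D, w - x ∈ D → ‖x‖ ≤ R := by
  by_contra hcon
  push_neg at hcon
  choose x hxD hwxD hx using fun n : ℕ => hcon n
  have hxpos : ∀ n : ℕ, 0 < ‖x n‖ := fun n => lt_of_le_of_lt (Nat.cast_nonneg n) (hx n)
  have hyD : ∀ n, ‖x n‖⁻¹ • x n ∈ D := fun n =>
    hDcone _ (hxD n) _ (inv_nonneg.mpr (norm_nonneg _))
  have hysphere : ∀ n, ‖x n‖⁻¹ • x n ∈ Metric.sphere (0 : V) 1 := by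
    intro n
    simp only [mem_sphere_iff_norm, sub_zero, norm_smul, norm_inv, norm_norm]
    exact inv_mul_cancel₀ (hxpos n).ne'
  obtain ⟨d, hd, φ, hφ, hlim⟩ := (isCompact_sphere (0 : V) 1).tendsto_subseq hysphere
  have hdD : d ∈ D := hDclosed.mem_of_tendsto hlim (Filter.Eventually.of_forall fun n => hyD _)
  have hinf : Filter.Tendsto (fun n => ‖x (φ n)‖) Filter.atTop Filter.atTop := by
    apply Filter.tendsto_atTop_mono (f := fun n : ℕ => (n : ℝ))
      (fun n => le_trans (Nat.cast_le.mpr (hφ.le_apply)) (hx (φ n)).le)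
      tendsto_natCast_atTop_atTop
  have hinv : Filter.Tendsto (fun n => ‖x (φ n)‖⁻¹) Filter.atTop (nhds 0) :=
    hinf.inv_tendsto_atTop
  have hzlim : Filter.Tendsto (fun n => ‖x (φ n)‖⁻¹ • (w - x (φ n)))
      Filter.atTop (nhds (-d)) := by
    have h1 : Filter.Tendsto (fun n => ‖x (φ n)‖⁻¹ • w - ‖x (φ n)‖⁻¹ • x (φ n))
        Filter.atTop (nhds ((0 : ℝ) • w - d)) := (hinv.smul_const w).sub hlim
    simp only [zero_smul, zero_sub] at h1
    refine h1.congr fun n => ?_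
    rw [smul_sub]
  have hnd : -d ∈ D := hDclosed.mem_of_tendsto hzlim
    (Filter.Eventually.of_forall fun n =>
      hDcone _ (hwxD (φ n)) _ (inv_nonneg.mpr (norm_nonneg _)))
  have : d = 0 := hDpointed d hdD hnd
  have h1 : ‖d‖ = 1 := by simpa [mem_sphere_iff_norm] using hd
  rw [this, norm_zero] at h1
  exact zero_ne_one h1

/-- If `C/Z` is a strongly strict submonoid of `A/Z` (witnessed by
a closed pointed convex cone `D ⊆ (A/Z) ⊗ ℝ`), then every separated
multifiltration on a finite dimensional vector space indexed by `(A, C)` is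
chain-separated. -/
theorem separated_implies_chainSeparated {k : Type*} [Field k] {A : Type*}
    [AddCommGroup A] [AddGroup.FG A]
    (C : AddSubmonoid A) (Z : AddSubgroup A)
    (hZ : (Z : Set A) = {a : A | a ∈ C ∧ -a ∈ C})
    (V : Type*) [NormedAddCommGroup V] [NormedSpace ℝ V]
    (ι : (A ⧸ Z) →ₗ[ℤ] V) (hbc : IsBaseChange ℝ ι)
    (D : Set V) (hDclosed : IsClosed D) (hDconv : Convex ℝ D)
    (hDcone : ∀ v ∈ D, ∀ r : ℝ, 0 ≤ r → r • v ∈ D)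
    (hDpointed : ∀ v ∈ D, -v ∈ D → v = 0)
    (hCD : ∀ a ∈ C, ι (QuotientAddGroup.mk' Z a) ∈ D)
    {E : Type*} [AddCommGroup E] [Module k E] [FiniteDimensional k E]
    (F : A → Submodule k E) (hF : mfIsFilt C F) (hsep : mfSeparated C F) :
    mfChainSeparated C F := by
    classical
  intro l hl
  -- basic chain facts
  have hle : ∀ i j : ℕ, i ≤ j → l j - l i ∈ C := by
    intro i j hij
    induction hij with
    | refl => simpa using C.zero_mem
    | @step m h ih =>
        have h2 := C.add_mem (hl m).1 ih
        rwa [sub_add_sub_cancel] at h2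
  have hstrict : ∀ i j : ℕ, i < j → l i - l j ∉ C := by
    intro i j hij hmem
    have h2 := C.add_mem hmem (hle (i + 1) j hij)
    rw [sub_add_sub_cancel] at h2
    exact (hl i).2 h2
  -- module-theoretic setup on `A ⧸ Z`
  haveI hMfin : Module.Finite ℤ (A ⧸ Z) :=
    Module.Finite.iff_addGroup_fg.mpr (by infer_instance)
  haveI : FiniteDimensional ℝ V := Module.Finite.equiv hbc.equiv
  set T : Submodule ℤ (A ⧸ Z) := Submodule.torsion ℤ (A ⧸ Z) with hT
  set J := Module.Free.ChooseBasisIndex ℤ ((A ⧸ Z) ⧸ T) with hJ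
  set b : Module.Basis J ℤ ((A ⧸ Z) ⧸ T) := Module.Free.chooseBasis ℤ ((A ⧸ Z) ⧸ T) with hb
  set fc : J → ((A ⧸ Z) →ₗ[ℤ] ℤ) := fun j => (b.coord j).comp T.mkQ with hfc
  set hfun : J → (V →ₗ[ℝ] ℝ) :=
    fun j => hbc.lift ((Algebra.linearMap ℤ ℝ).comp (fc j)) with hhfun
  have hkey : ∀ (j : J) (x : A ⧸ Z), hfun j (ι x) = ((fc j x : ℤ) : ℝ) := by
    intro j x
    exact hbc.lift_eq _ x
  -- tie-break: an element of `C` whose coordinates all vanish has its negative in `C`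
  have htie : ∀ x : A, x ∈ C → (∀ j : J, fc j (QuotientAddGroup.mk' Z x) = 0) → -x ∈ C := by
    intro x hxC hcoords
    have hπ : T.mkQ (QuotientAddGroup.mk' Z x) = 0 :=
      b.forall_coord_eq_zero_iff.mp hcoords
    have htor : (QuotientAddGroup.mk' Z x) ∈ T := (Submodule.Quotient.mk_eq_zero _).mp hπ
    obtain ⟨n, hn⟩ := (Submodule.mem_torsion_iff _).mp htor
    have hne : (n : ℤ) ≠ 0 := nonZeroDivisors.coe_ne_zero n
    have hZn : (n : ℤ) • x ∈ Z := by
      have h0 : QuotientAddGroup.mk' Z ((n : ℤ) • x) = 0 := by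
        rw [map_zsmul]; exact hn
      rwa [QuotientAddGroup.mk'_apply, QuotientAddGroup.eq_zero_iff] at h0
    set m : ℕ := (n : ℤ).natAbs with hm
    have hmpos : 0 < m := Int.natAbs_pos.mpr hne
    have hZm : m • x ∈ Z := by
      rcases Int.natAbs_eq (n : ℤ) with h | h
      · have : ((m : ℤ)) • x ∈ Z := by rw [← h]; exact hZn
        simpa [natCast_zsmul] using this
      · have : ((m : ℤ)) • x = -((n : ℤ) • x) := by
          rw [h, neg_smul, neg_neg]
        have h2 : ((m : ℤ)) • x ∈ Z := by rw [this]; exact Z.neg_mem hZn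
        simpa [natCast_zsmul] using h2
    have hmem : (m • x) ∈ (Z : Set A) := hZm
    rw [hZ] at hmem
    obtain ⟨h1, h2⟩ := hmem
    have hrw : (m - 1) • x + -(m • x) = -x := by
      have hsucc : (m - 1) + 1 = m := Nat.succ_pred_eq_of_pos hmpos
      rw [← hsucc, succ_nsmul]
      rw [Nat.add_sub_cancel, neg_add, add_neg_cancel_left]
    rw [← hrw]
    exact C.add_mem (AddSubmonoid.nsmul_mem C hxC _) h2
  -- the key emptiness statement
  have hempty : (⋂ K ∈ (Set.range fun i : ℕ => ({l i} : Set A)), mfTilde C K) = ∅ := by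
    rw [Set.biInter_range, Set.eq_empty_iff_forall_notMem]
    intro a ha
    rw [Set.mem_iInter] at ha
    have ha' : ∀ i : ℕ, a - l i ∈ C := by
      intro i
      obtain ⟨mm, hmm, hC⟩ := ha i
      rw [Set.mem_singleton_iff] at hmm
      rwa [hmm] at hC
    set v : ℕ → V := fun i => ι (QuotientAddGroup.mk' Z (a - l i)) with hv
    have hvD : ∀ i, v i ∈ D := fun i => hCD _ (ha' i)
    have hwD : ∀ i, v 0 - v i ∈ D := by
      intro i
      have heq : v 0 - v i = ι (QuotientAddGroup.mk' Z (l i - l 0)) := by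
        rw [hv]
        rw [← map_sub, ← map_sub]
        congr 1
        abel_nf
      rw [heq]
      exact hCD _ (hle 0 i (Nat.zero_le i))
    obtain ⟨R, hR⟩ := mfAux_cone_bounded hDclosed hDcone hDpointed (v 0)
    have hvR : ∀ i, ‖v i‖ ≤ R := fun i => hR _ (hvD i) (hwD i)
    set hc : J → (V →L[ℝ] ℝ) := fun j => LinearMap.toContinuousLinearMap (hfun j) with hhc
    set Nb : J → ℤ := fun j => ⌈‖hc j‖ * R⌉ with hNb
    have hcoordmem : ∀ (i : ℕ) (j : J),
        fc j (QuotientAddGroup.mk' Z (a - l i)) ∈ Finset.Icc (-(Nb j)) (Nb j) := by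
      intro i j
      have h1 : ((fc j (QuotientAddGroup.mk' Z (a - l i)) : ℤ) : ℝ) = hc j (v i) :=
        (hkey j _).symm
      have h2 : |hc j (v i)| ≤ ‖hc j‖ * R := by
        calc |hc j (v i)| = ‖hc j (v i)‖ := rfl
          _ ≤ ‖hc j‖ * ‖v i‖ := (hc j).le_opNorm _
          _ ≤ ‖hc j‖ * R := by
              exact mul_le_mul_of_nonneg_left (hvR i) (norm_nonneg _)
      have h3 : (|fc j (QuotientAddGroup.mk' Z (a - l i))| : ℝ) ≤ ((Nb j : ℤ) : ℝ) := by
        push_cast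
        rw [h1]
        exact h2.trans (Int.le_ceil _)
      have h4 : |fc j (QuotientAddGroup.mk' Z (a - l i))| ≤ Nb j := by
        exact_mod_cast h3
      rw [Finset.mem_Icc]
      constructor
      · linarith [neg_abs_le (fc j (QuotientAddGroup.mk' Z (a - l i)))]
      · exact (le_abs_self _).trans h4
    obtain ⟨i, i', hne, heqc⟩ := Finite.exists_ne_map_eq_of_infinite
      (fun i : ℕ => (fun j : J =>
        (⟨fc j (QuotientAddGroup.mk' Z (a - l i)), hcoordmem i j⟩ :
          (Finset.Icc (-(Nb j)) (Nb j)))))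
    have heq : ∀ j : J, fc j (QuotientAddGroup.mk' Z (a - l i))
        = fc j (QuotientAddGroup.mk' Z (a - l i')) := by
      intro j
      exact congrArg Subtype.val (congrFun heqc j)
    have main : ∀ p q : ℕ, p < q →
        (∀ j : J, fc j (QuotientAddGroup.mk' Z (a - l p))
          = fc j (QuotientAddGroup.mk' Z (a - l q))) → False := by
      intro p q hpq hco
      have hxC : l q - l p ∈ C := hle p q hpq.le
      have hz : ∀ j : J, fc j (QuotientAddGroup.mk' Z (l q - l p)) = 0 := by
        intro j
        have hd : l q - l p = (a - l p) - (a - l q) := by abel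
        rw [hd, map_sub, map_sub, hco j, sub_self]
      have := htie _ hxC hz
      rw [neg_sub] at this
      exact hstrict p q hpq this
    rcases hne.lt_or_gt with h | h
    · exact main i i' h heq
    · exact main i' i h (fun j => (heq j).symm)
  -- apply separatedness
  have hbot := hsep (Set.range fun i : ℕ => ({l i} : Set A)) hempty
  have hinf : (⨅ i : ℕ, F (l i)) = ⊥ := by
    rw [iInf_range] at hbot
    simpa [mfPiece, iSup_singleton] using hbot
  -- stabilization of the decreasing sequence of submodules
  obtain ⟨n, hn⟩ := IsArtinian.monotone_stabilizes
    (⟨fun i => OrderDual.toDual (F (l i)),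
      fun i j hij => hF (l i) (l j) (hle i j hij)⟩ : ℕ →o (Submodule k E)ᵒᵈ)
  refine ⟨n, fun i hi => ?_⟩
  have hlow : F (l n) ≤ ⨅ m : ℕ, F (l m) := by
    refine le_iInf fun m => ?_
    rcases le_total m n with h | h
    · exact hF (l m) (l n) (hle m n h)
    · exact le_of_eq (congrArg OrderDual.ofDual (hn m h))
  have hni : F (l i) = F (l n) := (congrArg OrderDual.ofDual (hn i hi)).symm
  rw [hni]
  exact le_bot_iff.mp (hinf ▸ hlow)
end

section
/- Let φ: (A,C) → (A',C') be a morphism of preordered finitely generated abelian groups, and (E,F) a multifiltered vector space indexed by (A,C). If F is separated, then Ind_φ(F) is separated. -/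
/-- `Ind_φ` preserves separatedness. -/
theorem ind_separated {k : Type*} [Field k] {A A' : Type*} [AddCommGroup A]
    [AddCommGroup A'] [AddGroup.FG A] [AddGroup.FG A']
    (C : AddSubmonoid A) (C' : AddSubmonoid A') (φ : A →+ A')
    (hφ : ∀ a ∈ C, φ a ∈ C')
    {E : Type*} [AddCommGroup E] [Module k E]
    (F : A → Submodule k E) (hF : mfIsFilt C F) (hsep : mfSeparated C F) :
    mfSeparated C' (mfInd C' φ F) := by
  intro 𝒦 hK
  have key : ∀ K : Set A', mfPiece (mfInd C' φ F) K = mfPiece F (φ ⁻¹' mfTilde C' K) := by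
    intro K
    apply le_antisymm
    · simp only [mfPiece, mfInd, iSup_le_iff]
      intro l hl m hm
      exact le_iSup₂ (f := fun m (_ : m ∈ φ ⁻¹' mfTilde C' K) => F m) m ⟨l, hl, hm⟩
    · simp only [mfPiece, iSup_le_iff]
      rintro m ⟨n, hn, h⟩
      calc F m ≤ ⨆ (m : A) (_ : φ m - n ∈ C'), F m :=
            le_iSup₂ (f := fun m (_ : φ m - n ∈ C') => F m) m h
        _ ≤ ⨆ l ∈ K, mfInd C' φ F l :=
            le_iSup₂ (f := fun l (_ : l ∈ K) => mfInd C' φ F l) n hn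
  have hK' : (⋂ K ∈ 𝒦, mfTilde C (φ ⁻¹' mfTilde C' K)) = ∅ := by
    rw [Set.eq_empty_iff_forall_notMem]
    intro x hx
    have : φ x ∈ ⋂ K ∈ 𝒦, mfTilde C' K := by
      simp only [Set.mem_iInter] at hx ⊢
      intro K hKm
      obtain ⟨m, hm, hxm⟩ := hx K hKm
      obtain ⟨n, hn, hmn⟩ := hm
      refine ⟨n, hn, ?_⟩
      have h1 : φ x - φ m ∈ C' := by
        have := hφ _ hxm
        rwa [map_sub] at this
      have := C'.add_mem h1 hmn
      simpa [sub_add_sub_cancel] using this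
    rw [hK] at this
    exact this
  have := hsep ((fun K => φ ⁻¹' mfTilde C' K) '' 𝒦) (by
    rw [Set.eq_empty_iff_forall_notMem]
    intro x hx
    rw [Set.eq_empty_iff_forall_notMem] at hK'
    apply hK' x
    simp only [Set.mem_iInter] at hx ⊢
    intro K hKm
    exact hx _ ⟨K, hKm, rfl⟩)
  rw [iInf_image] at this
  rw [← this]
  exact iInf_congr fun K => iInf_congr fun _ => key K
end

section
/- Let φ: (A,C) → (A',C') be a morphism of preordered finitely generated abelian groups with φ surjective and C = φ⁻¹(C'). If (E,F) is a multifiltered vector space indexed by (A',C') and F is separated, then Res^φ(F) is separated. -/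
/-- If `φ` is surjective and `C = φ⁻¹(C')`, then `Res^φ`
preserves separatedness. -/
theorem res_separated {k : Type*} [Field k] {A A' : Type*} [AddCommGroup A]
    [AddCommGroup A'] [AddGroup.FG A] [AddGroup.FG A']
    (C : AddSubmonoid A) (C' : AddSubmonoid A') (φ : A →+ A')
    (hsurj : Function.Surjective φ) (hC : ∀ a : A, a ∈ C ↔ φ a ∈ C')
    {E : Type*} [AddCommGroup E] [Module k E]
    (F : A' → Submodule k E) (hF : mfIsFilt C' F) (hsep : mfSeparated C' F) :
    mfSeparated C (mfRes φ F) := by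
  intro 𝒦 hempty
  set 𝒦' : Set (Set A') := (Set.image φ) '' 𝒦 with h𝒦'
  have hT : (⋂ K ∈ 𝒦', mfTilde C' K) = ∅ := by
    ext l'
    simp only [Set.mem_iInter, Set.mem_empty_iff_false, iff_false]
    intro hl'
    obtain ⟨l, rfl⟩ := hsurj l'
    have hl : l ∈ ⋂ K ∈ 𝒦, mfTilde C K := by
      simp only [Set.mem_iInter]
      intro K hK
      have h1 := hl' (φ '' K) ⟨K, hK, rfl⟩
      obtain ⟨m', ⟨m, hm, rfl⟩, hc⟩ := h1
      refine ⟨m, hm, (hC _).2 ?_⟩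
      simpa using hc
    rw [hempty] at hl
    exact hl
  have hbot := hsep 𝒦' hT
  have hle : (⨅ K ∈ 𝒦, mfPiece (mfRes φ F) K) ≤ ⨅ K ∈ 𝒦', mfPiece F K := by
    refine le_iInf₂ fun K' hK' => ?_
    obtain ⟨K, hK, rfl⟩ := hK'
    refine iInf₂_le_of_le K hK (le_of_eq ?_)
    show (⨆ l ∈ K, F (φ l)) = ⨆ l ∈ φ '' K, F l
    exact (iSup_image).symm
  exact le_bot_iff.mp (hbot ▸ hle)
end

section
/- Let φ: (A,C) → (A',C') be a surjective morphism of preordered abelian groups with C = φ⁻¹(C'). Then for any pair of subsets K₁, K₂ ⊆ A, φ(K̃₁ ∩ K̃₂)~ = φ(K₁)~ ∩ φ(K₂)~, where for S ⊆ A (resp. A'), S̃ denotes the up-closure {λ : λ ≥ μ for some μ ∈ S} with respect to C (resp. C'). -/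
/-- If `φ` is surjective and `C = φ⁻¹(C')`, then
`φ(K̃₁ ∩ K̃₂)~ = φ(K₁)~ ∩ φ(K₂)~` for all subsets `K₁, K₂ ⊆ A`. -/
theorem tilde_image_inter {A A' : Type*} [AddCommGroup A] [AddCommGroup A']
    (C : AddSubmonoid A) (C' : AddSubmonoid A') (φ : A →+ A')
    (hsurj : Function.Surjective φ) (hC : ∀ a : A, a ∈ C ↔ φ a ∈ C')
    (K₁ K₂ : Set A) :
    mfTilde C' (φ '' (mfTilde C K₁ ∩ mfTilde C K₂)) =
      mfTilde C' (φ '' K₁) ∩ mfTilde C' (φ '' K₂) := by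
  ext l'
  constructor
  · rintro ⟨-, ⟨a, ⟨⟨m1, hm1, hma1⟩, ⟨m2, hm2, hma2⟩⟩, rfl⟩, hla⟩
    refine ⟨⟨φ m1, ⟨m1, hm1, rfl⟩, ?_⟩, ⟨φ m2, ⟨m2, hm2, rfl⟩, ?_⟩⟩
    · have := C'.add_mem hla (((hC _).mp hma1))
      simpa [sub_add_sub_cancel] using this
    · have := C'.add_mem hla (((hC _).mp hma2))
      simpa [sub_add_sub_cancel] using this
  · rintro ⟨⟨-, ⟨m1, hm1, rfl⟩, h1⟩, ⟨-, ⟨m2, hm2, rfl⟩, h2⟩⟩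
    obtain ⟨a, rfl⟩ := hsurj l'
    refine ⟨φ a, ⟨a, ⟨⟨m1, hm1, ?_⟩, ⟨m2, hm2, ?_⟩⟩, rfl⟩, by simpa using C'.zero_mem⟩
    · exact (hC _).mpr (by simpa using h1)
    · exact (hC _).mpr (by simpa using h2)
end

section
/- Let φ: (A,C) → (A',C') be a surjective morphism of preordered finitely generated abelian groups with C = φ⁻¹(C'). If (E,F) is a multifiltered vector space indexed by (A',C') and F is regular, then Res^φ(F) is regular. Moreover, for any morphism φ, if F is a regular multifiltration indexed by (A,C), then Ind_φ(F) is regular. -/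
section Aux

variable {A A' : Type*} [AddCommGroup A] [AddCommGroup A']
  {k E : Type*} [Field k] [AddCommGroup E] [Module k E]

lemma mfPiece_res (φ : A →+ A') (F : A' → Submodule k E) (K : Set A) :
    mfPiece (mfRes φ F) K = mfPiece F (φ '' K) := by
  apply le_antisymm
  · apply iSup₂_le; intro l hl
    exact le_iSup₂_of_le (φ l) ⟨l, hl, rfl⟩ le_rfl
  · apply iSup₂_le; rintro l' ⟨l, hl, rfl⟩
    exact le_iSup₂_of_le l hl le_rfl

lemma mfPiece_ind (C' : AddSubmonoid A') (φ : A →+ A') (F : A → Submodule k E) (K : Set A') :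
    mfPiece (mfInd C' φ F) K = mfPiece F {m | φ m ∈ mfTilde C' K} := by
  apply le_antisymm
  · apply iSup₂_le; intro l hl
    apply iSup₂_le; intro m hm
    exact le_iSup₂_of_le m ⟨l, hl, hm⟩ le_rfl
  · apply iSup₂_le; rintro m ⟨l, hl, hm⟩
    exact le_iSup₂_of_le l hl (le_iSup₂_of_le m hm le_rfl)

lemma mfTilde_inter_tilde (C : AddSubmonoid A) (K₁ K₂ : Set A) :
    mfTilde C (mfTilde C K₁ ∩ mfTilde C K₂) = mfTilde C K₁ ∩ mfTilde C K₂ := by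
  ext l
  constructor
  · rintro ⟨m, ⟨⟨m₁, hm₁, h1⟩, ⟨m₂, hm₂, h2⟩⟩, hlm⟩
    constructor
    · exact ⟨m₁, hm₁, by simpa using C.add_mem hlm h1⟩
    · exact ⟨m₂, hm₂, by simpa using C.add_mem hlm h2⟩
  · intro hl
    exact ⟨l, hl, by simpa using C.zero_mem⟩

end Aux

/-- If `φ` is surjective with `C = φ⁻¹(C')`, then `Res^φ`
preserves regularity; moreover for any morphism `φ` of preordered f.g. abelian
groups, `Ind_φ` preserves regularity. -/
theorem res_ind_regular {k : Type*} [Field k] {A A' : Type*} [AddCommGroup A]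
    [AddCommGroup A'] [AddGroup.FG A] [AddGroup.FG A']
    (C : AddSubmonoid A) (C' : AddSubmonoid A') (φ : A →+ A')
    (hφ : ∀ a ∈ C, φ a ∈ C')
    {E : Type*} [AddCommGroup E] [Module k E] :
    (Function.Surjective φ → (∀ a : A, a ∈ C ↔ φ a ∈ C') →
      ∀ F : A' → Submodule k E, mfIsFilt C' F → mfRegular C' F →
        mfRegular C (mfRes φ F)) ∧
    (∀ F : A → Submodule k E, mfIsFilt C F → mfRegular C F →
      mfRegular C' (mfInd C' φ F)) := by
  constructor
  · intro hsurj hC F _ hreg K₁ K₂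
    have himg : φ '' (mfTilde C K₁ ∩ mfTilde C K₂) =
        mfTilde C' (φ '' K₁) ∩ mfTilde C' (φ '' K₂) := by
      ext l'
      constructor
      · rintro ⟨l, ⟨⟨m₁, hm₁, h1⟩, ⟨m₂, hm₂, h2⟩⟩, rfl⟩
        exact ⟨⟨φ m₁, ⟨m₁, hm₁, rfl⟩, by simpa [map_sub] using (hC _).1 h1⟩,
          ⟨φ m₂, ⟨m₂, hm₂, rfl⟩, by simpa [map_sub] using (hC _).1 h2⟩⟩
      · rintro ⟨⟨_, ⟨m₁, hm₁, rfl⟩, h1⟩, ⟨_, ⟨m₂, hm₂, rfl⟩, h2⟩⟩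
        obtain ⟨l, rfl⟩ := hsurj l'
        refine ⟨l, ⟨⟨m₁, hm₁, ?_⟩, ⟨m₂, hm₂, ?_⟩⟩, rfl⟩
        · exact (hC _).2 (by simpa [map_sub] using h1)
        · exact (hC _).2 (by simpa [map_sub] using h2)
    rw [mfPiece_res, mfPiece_res, mfPiece_res, himg, hreg]
  · intro F _ hreg K₁ K₂
    set T : Set A' → Set A := fun K => {m | φ m ∈ mfTilde C' K} with hT
    have hTtilde : ∀ K : Set A', mfTilde C (T K) = T K := by
      intro K
      ext m'
      constructor
      · rintro ⟨m, ⟨l, hl, hml⟩, hm'⟩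
        refine ⟨l, hl, ?_⟩
        have := C'.add_mem (hφ _ hm') hml
        simpa [map_sub, sub_add_sub_cancel] using this
      · intro h
        exact ⟨m', h, by simpa using C.zero_mem⟩
    have key : T (mfTilde C' K₁ ∩ mfTilde C' K₂) = T K₁ ∩ T K₂ := by
      simp only [hT]
      ext m
      simp only [Set.mem_setOf_eq, Set.mem_inter_iff,
        mfTilde_inter_tilde C' K₁ K₂]
    rw [mfPiece_ind, mfPiece_ind, mfPiece_ind, hreg]
    have heq : mfTilde C (T K₁) ∩ mfTilde C (T K₂) = T (mfTilde C' K₁ ∩ mfTilde C' K₂) := by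
      rw [hTtilde, hTtilde, key]
    exact congrArg (mfPiece F) heq
end

section
/- Let (A,C) be a preordered finitely generated abelian group with C a generating cone, E a finite dimensional vector space with an exhaustive, chain-separated, decreasing multifiltration F indexed by (A,C), S ⊆ E a subspace and Q = E/S. Then the induced multifiltrations on S (F^λS = S ∩ F^λE) and on Q (F^λQ = F^λE/(F^λE ∩ S)) are exhaustive and chain-separated. Furthermore, if F is separated, the induced multifiltrations on S and Q are separated. -/
set_option linter.unusedSectionVars false

section Aux

open Submodule

variable {A : Type*} [AddCommGroup A] {k : Type*} [Field k]

lemma mfTilde_union (C : AddSubmonoid A) (K₁ K₂ : Set A) :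
    mfTilde C (K₁ ∪ K₂) = mfTilde C K₁ ∪ mfTilde C K₂ := by
  ext l
  simp only [mfTilde, Set.mem_union, Set.mem_setOf_eq]
  constructor
  · rintro ⟨m, hm | hm, h⟩
    · exact Or.inl ⟨m, hm, h⟩
    · exact Or.inr ⟨m, hm, h⟩
  · rintro (⟨m, hm, h⟩ | ⟨m, hm, h⟩)
    · exact ⟨m, Or.inl hm, h⟩
    · exact ⟨m, Or.inr hm, h⟩

lemma mfTilde_upclosed (C : AddSubmonoid A) (K : Set A) {ν μ : A}
    (hν : ν ∈ mfTilde C K) (h : μ - ν ∈ C) : μ ∈ mfTilde C K := by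
  obtain ⟨m, hm, h1⟩ := hν
  refine ⟨m, hm, ?_⟩
  have := C.add_mem h h1
  rwa [sub_add_sub_cancel] at this

variable {E : Type*} [AddCommGroup E] [Module k E]

lemma mfPiece_union (F : A → Submodule k E) (K₁ K₂ : Set A) :
    mfPiece F (K₁ ∪ K₂) = mfPiece F K₁ ⊔ mfPiece F K₂ := by
  simp only [mfPiece]
  exact iSup_union

lemma mfPiece_map {E' : Type*} [AddCommGroup E'] [Module k E'] (f : E →ₗ[k] E')
    (F : A → Submodule k E) (K : Set A) :
    mfPiece (fun l => (F l).map f) K = (mfPiece F K).map f := by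
  simp [mfPiece, Submodule.map_iSup]

/-- From separatedness: if `v ≠ 0` lies in every piece of a family, there is a common
point of the up-closures. -/
lemma exists_of_sep {C : AddSubmonoid A} {F : A → Submodule k E} (hsep : mfSeparated C F)
    (𝒥 : Set (Set A)) {v : E} (hv : ∀ J ∈ 𝒥, v ∈ mfPiece F J) (hv0 : v ≠ 0) :
    ∃ ν, ∀ J ∈ 𝒥, ν ∈ mfTilde C J := by
  by_contra h
  push_neg at h
  apply hv0
  have hKe : (⋂ J ∈ 𝒥, mfTilde C J) = ∅ := by
    rw [Set.eq_empty_iff_forall_notMem]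
    intro ν hν
    rw [Set.mem_iInter₂] at hν
    obtain ⟨J, hJ, hνJ⟩ := h ν
    exact hνJ (hν J hJ)
  have hmem : v ∈ (⨅ J ∈ 𝒥, mfPiece F J) := by
    rw [Submodule.mem_iInf]
    intro J
    rw [Submodule.mem_iInf]
    exact hv J
  rw [hsep 𝒥 hKe] at hmem
  simpa using hmem

/-- Step A: separatedness passes to the quotient by a line. -/
lemma stepA (C : AddSubmonoid A)
    (hub : ∀ a b : A, ∃ c, c - a ∈ C ∧ c - b ∈ C)
    {E : Type*} [AddCommGroup E] [Module k E] {s₀ : E} (hs₀ : s₀ ≠ 0)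
    (F : A → Submodule k E) (hsep : mfSeparated C F) :
    mfSeparated C (fun l => (F l).map (Submodule.span k {s₀}).mkQ) := by
  intro 𝒦 hKe
  rw [Submodule.eq_bot_iff]
  intro x hx
  by_contra hx0
  set π := (Submodule.span k {s₀}).mkQ with hπdef
  simp only [Submodule.mem_iInf] at hx
  have hx' : ∀ K : Set A, K ∈ 𝒦 → ∃ e, e ∈ mfPiece F K ∧ π e = x := by
    intro K hK
    have h2 := hx K hK
    rw [mfPiece_map] at h2
    obtain ⟨e, he, hee⟩ := h2
    exact ⟨e, he, hee⟩
  choose e he hπe using hx'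
  -- family 𝒢
  set 𝒢 : Set (Set A) :=
    {J | ∃ K, K ∈ 𝒦 ∧ ∃ K', K' ∈ 𝒦 ∧ J = K ∪ K' ∧ s₀ ∈ mfPiece F K ⊔ mfPiece F K'} with h𝒢
  obtain ⟨ν₁, hν₁⟩ : ∃ ν, ∀ J ∈ 𝒢, ν ∈ mfTilde C J := by
    refine exists_of_sep hsep 𝒢 ?_ hs₀
    rintro J ⟨K, hK, K', hK', rfl, hs⟩
    rwa [mfPiece_union]
  -- a set missed by ν₁
  obtain ⟨Ks, hKs, hνKs⟩ : ∃ Ks, Ks ∈ 𝒦 ∧ ν₁ ∉ mfTilde C Ks := by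
    by_contra h
    push_neg at h
    have : ν₁ ∈ ⋂ K ∈ 𝒦, mfTilde C K := Set.mem_iInter₂.mpr h
    rw [hKe] at this
    exact this
  -- the dichotomy
  have dich : ∀ K, ∀ hK : K ∈ 𝒦, ν₁ ∈ mfTilde C K ∨ e Ks hKs ∈ mfPiece F K := by
    intro K hK
    by_cases hcase : s₀ ∈ mfPiece F K ⊔ mfPiece F Ks
    · left
      have hJ : (K ∪ Ks) ∈ 𝒢 := ⟨K, hK, Ks, hKs, rfl, hcase⟩
      have := hν₁ _ hJ
      rw [mfTilde_union] at this
      exact this.resolve_right hνKs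
    · right
      have hker : e K hK - e Ks hKs ∈ Submodule.span k {s₀} := by
        rw [← Submodule.ker_mkQ (Submodule.span k {s₀}), LinearMap.mem_ker, map_sub,
          hπe K hK, hπe Ks hKs, sub_self]
      obtain ⟨c, hc⟩ := Submodule.mem_span_singleton.mp hker
      by_cases hc0 : c = 0
      · have hd : e K hK - e Ks hKs = 0 := by rw [← hc, hc0, zero_smul]
        rw [← sub_eq_zero.mp hd]
        exact he K hK
      · exfalso
        apply hcase
        have hs : s₀ = c⁻¹ • (e K hK - e Ks hKs) := by
          rw [← hc, smul_smul, inv_mul_cancel₀ hc0, one_smul]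
        rw [hs]
        exact Submodule.smul_mem _ _
          (sub_mem (le_sup_left (a := mfPiece F K) (he K hK))
            (le_sup_right (b := mfPiece F Ks) (he Ks hKs)))
  -- family ℋ
  set eKs := e Ks hKs with heKs
  have heKs0 : eKs ≠ 0 := by
    intro h0
    apply hx0
    rw [← hπe Ks hKs, ← heKs, h0, map_zero]
  set ℋ : Set (Set A) := {J | J ∈ 𝒦 ∧ eKs ∈ mfPiece F J} with hℋ
  obtain ⟨ν₂, hν₂⟩ : ∃ ν, ∀ J ∈ ℋ, ν ∈ mfTilde C J := by
    refine exists_of_sep hsep ℋ ?_ heKs0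
    rintro J ⟨hJ, hJ2⟩
    exact hJ2
  obtain ⟨ν, hν1, hν2⟩ := hub ν₁ ν₂
  have : ν ∈ ⋂ K ∈ 𝒦, mfTilde C K := by
    rw [Set.mem_iInter₂]
    intro K hK
    rcases dich K hK with h | h
    · exact mfTilde_upclosed C K h hν1
    · exact mfTilde_upclosed C K (hν₂ K ⟨hK, h⟩) hν2
  rw [hKe] at this
  exact this

end Aux

section Aux2

open Submodule

universe u v

variable {A : Type*} [AddCommGroup A] {k : Type*} [Field k]

lemma quotSepAux (C : AddSubmonoid A)
    (hub : ∀ a b : A, ∃ c, c - a ∈ C ∧ c - b ∈ C) (n : ℕ) :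
    ∀ {E : Type u} [AddCommGroup E] [Module k E] {Q : Type v} [AddCommGroup Q] [Module k Q]
      (f : E →ₗ[k] Q), Function.Surjective f → Module.Finite k (LinearMap.ker f) →
      Module.finrank k (LinearMap.ker f) = n →
      ∀ F : A → Submodule k E, mfSeparated C F → mfSeparated C (fun l => (F l).map f) := by
  haveI : Nonempty A := ⟨0⟩
  induction n with
  | zero =>
    intro E _ _ Q _ _ f hsurj hfin hrank F hsep
    haveI := hfin
    have hker : LinearMap.ker f = ⊥ := Submodule.finrank_eq_zero.mp hrank
    have hinj : Function.Injective f := LinearMap.ker_eq_bot.mp hker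
    intro 𝒦 hKe
    have hne : 𝒦.Nonempty := by
      by_contra h
      rw [Set.not_nonempty_iff_eq_empty] at h
      subst h
      simp only [Set.mem_empty_iff_false, Set.iInter_of_empty, Set.iInter_univ] at hKe
      exact (Set.univ_eq_empty_iff.mp hKe).elim (0 : A)
    obtain ⟨K₀, hK₀⟩ := hne
    rw [Submodule.eq_bot_iff]
    intro x hx
    simp only [Submodule.mem_iInf] at hx
    have h0 := hx K₀ hK₀
    rw [mfPiece_map] at h0
    obtain ⟨y, hy, rfl⟩ := h0
    have hy' : y ∈ ⨅ K ∈ 𝒦, mfPiece F K := by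
      rw [Submodule.mem_iInf]; intro K; rw [Submodule.mem_iInf]; intro hK
      have h1 := hx K hK
      rw [mfPiece_map] at h1
      obtain ⟨y', hy', he⟩ := h1
      rwa [← hinj he]
    rw [hsep 𝒦 hKe] at hy'
    rw [Submodule.mem_bot] at hy'
    rw [hy', map_zero]
  | succ n ih =>
    intro E _ _ Q _ _ f hsurj hfin hrank F hsep
    haveI := hfin
    -- pick a nonzero element of the kernel
    have hker : LinearMap.ker f ≠ ⊥ := by
      intro h
      rw [h] at hrank
      rw [finrank_bot] at hrank
      omega
    obtain ⟨s₀, hs₀ker, hs₀⟩ := (Submodule.ne_bot_iff _).mp hker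
    set S₁ : Submodule k E := Submodule.span k {s₀} with hS₁
    have hle : S₁ ≤ LinearMap.ker f := by
      rw [hS₁, Submodule.span_le, Set.singleton_subset_iff]
      exact hs₀ker
    set G : A → Submodule k (E ⧸ S₁) := fun l => (F l).map S₁.mkQ with hG
    have hGsep : mfSeparated C G := stepA C hub hs₀ F hsep
    set fbar : (E ⧸ S₁) →ₗ[k] Q := S₁.liftQ f hle with hfbar
    have hcomp : fbar.comp S₁.mkQ = f := Submodule.liftQ_mkQ _ _ _
    have hsurj' : Function.Surjective fbar := by
      intro q
      obtain ⟨e, he⟩ := hsurj q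
      exact ⟨S₁.mkQ e, by rw [← hcomp] at he; exact he⟩
    have hker' : LinearMap.ker fbar = (LinearMap.ker f).map S₁.mkQ :=
      Submodule.ker_liftQ _ _ _
    haveI hfin' : Module.Finite k (LinearMap.ker fbar) := by
      rw [hker']; infer_instance
    have hrank' : Module.finrank k (LinearMap.ker fbar) = n := by
      set g : (LinearMap.ker f) →ₗ[k] E ⧸ S₁ := S₁.mkQ.comp (LinearMap.ker f).subtype with hg
      have hrange : LinearMap.range g = (LinearMap.ker f).map S₁.mkQ := by
        rw [hg, LinearMap.range_comp, Submodule.range_subtype]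
      have hkerg : LinearMap.ker g = S₁.comap (LinearMap.ker f).subtype := by
        rw [hg, LinearMap.ker_comp, Submodule.ker_mkQ]
      have hsum := LinearMap.finrank_range_add_finrank_ker g
      rw [hrange, hkerg] at hsum
      have h1 : Module.finrank k (S₁.comap (LinearMap.ker f).subtype) = 1 := by
        rw [LinearEquiv.finrank_eq (Submodule.comapSubtypeEquivOfLe hle)]
        exact finrank_span_singleton hs₀
      rw [h1, hrank] at hsum
      rw [hker']
      omega
    have hres := ih fbar hsurj' hfin' hrank' G hGsep
    have heq : (fun l => (G l).map fbar) = fun l => (F l).map f := by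
      funext l
      rw [hG, ← Submodule.map_comp, hcomp]
    rwa [heq] at hres

end Aux2

/-- For a generating cone `C`, the multifiltrations induced on a
subspace `S ⊆ E` and on the quotient `Q = E/S` by an exhaustive chain-separated
multifiltration are exhaustive and chain-separated; if moreover `F` is
separated, so are the induced multifiltrations. -/
theorem induced_sub_quot {k : Type*} [Field k] {A : Type*} [AddCommGroup A]
    [AddGroup.FG A]
    (V : Type*) [AddCommGroup V] [Module ℚ V]
    (ι : A →ₗ[ℤ] V) [IsLocalizedModule (nonZeroDivisors ℤ) ι]
    (C : AddSubmonoid A)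
    (hcone : ∃ D : Set V, Convex ℚ D ∧ (∀ v ∈ D, ∀ q : ℚ, 0 ≤ q → q • v ∈ D) ∧
      (C : Set A) = ι ⁻¹' D)
    (hgen : ∀ a : A, ∃ x ∈ C, ∃ y ∈ C, a = x - y)
    {E : Type*} [AddCommGroup E] [Module k E] [FiniteDimensional k E]
    (F : A → Submodule k E) (hF : mfIsFilt C F)
    (hex : mfExhaustive F) (hcs : mfChainSeparated C F)
    (S : Submodule k E) :
    mfExhaustive (fun l => Submodule.comap S.subtype (F l)) ∧
    mfExhaustive (fun l => Submodule.map S.mkQ (F l)) ∧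
    mfChainSeparated C (fun l => Submodule.comap S.subtype (F l)) ∧
    mfChainSeparated C (fun l => Submodule.map S.mkQ (F l)) ∧
    (mfSeparated C F →
      mfSeparated C (fun l => Submodule.comap S.subtype (F l)) ∧
      mfSeparated C (fun l => Submodule.map S.mkQ (F l))) := by
  haveI : Nonempty A := ⟨0⟩
  -- upper bounds exist
  have hub : ∀ a b : A, ∃ c, c - a ∈ C ∧ c - b ∈ C := by
    intro a b
    obtain ⟨x, hx, y, hy, hxy⟩ := hgen (a - b)
    refine ⟨a + y, ?_, ?_⟩
    · have h1 : a + y - a = y := by abel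
      rw [h1]; exact hy
    · have h2 : a + y - b = x := by
        have h3 : x = a - b + y := by rw [hxy]; abel
        rw [h3]; abel
      rw [h2]; exact hx
  -- the filtration is downward directed upwards
  have hdir : Directed (· ≤ ·) F := by
    intro l m
    obtain ⟨x, hx, y, hy, hxy⟩ := hgen (l - m)
    refine ⟨l - x, hF _ _ ?_, hF _ _ ?_⟩
    · have h1 : l - (l - x) = x := by abel
      rw [h1]; exact hx
    · have h2 : m - (l - x) = y := by
        have h3 : y = x - (l - m) := by rw [hxy]; abel
        rw [h3]; abel
      rw [h2]; exact hy
  refine ⟨?_, ?_, ?_, ?_, ?_⟩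
  · -- exhaustive on S
    rw [mfExhaustive, eq_top_iff]
    rintro s -
    have hsE : (s : E) ∈ (⊤ : Submodule k E) := trivial
    rw [← hex] at hsE
    obtain ⟨l, hl⟩ := (Submodule.mem_iSup_of_directed F hdir).mp hsE
    exact Submodule.mem_iSup_of_mem l hl
  · -- exhaustive on Q
    rw [mfExhaustive, ← Submodule.map_iSup, hex, Submodule.map_top, Submodule.range_mkQ]
  · -- chain-separated on S
    intro l hl
    obtain ⟨i₀, h⟩ := hcs l hl
    exact ⟨i₀, fun i hi => by
      show Submodule.comap S.subtype (F (l i)) = ⊥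
      rw [h i hi]
      simp [Submodule.comap_bot, Submodule.ker_subtype]⟩
  · -- chain-separated on Q
    intro l hl
    obtain ⟨i₀, h⟩ := hcs l hl
    exact ⟨i₀, fun i hi => by
      show Submodule.map S.mkQ (F (l i)) = ⊥
      rw [h i hi]; exact Submodule.map_bot _⟩
  · -- separatedness
    intro hsep
    constructor
    · -- on S
      intro 𝒦 hKe
      rw [Submodule.eq_bot_iff]
      intro x hx
      simp only [Submodule.mem_iInf] at hx
      have hmem : (x : E) ∈ ⨅ K ∈ 𝒦, mfPiece F K := by
        rw [Submodule.mem_iInf]; intro K; rw [Submodule.mem_iInf]; intro hK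
        have h1 := hx K hK
        have hle : mfPiece (fun l => Submodule.comap S.subtype (F l)) K ≤
            Submodule.comap S.subtype (mfPiece F K) := by
          refine iSup₂_le fun l hl => Submodule.comap_mono ?_
          exact le_iSup₂ (f := fun l (_ : l ∈ K) => F l) l hl
        exact hle h1
      rw [hsep 𝒦 hKe] at hmem
      rw [Submodule.mem_bot] at hmem
      exact Subtype.ext hmem
    · -- on Q
      have := quotSepAux C hub (Module.finrank k S)
        S.mkQ S.mkQ_surjective ?_ ?_ F hsep
      · exact this
      · rw [Submodule.ker_mkQ]; infer_instance
      · rw [Submodule.ker_mkQ]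
end

section
/- Let (A,C) be a preordered finitely generated abelian group, E a finite dimensional vector space with a decreasing, exhaustive, chain-separated multifiltration F, and 𝒥 ⊆ A the set of jump points (λ with gr^λ_F E = F^λE / Σ_{μ>λ}F^μE ≠ 0). Then E = Σ_{j∈𝒥} F^j E. In particular, if E ≠ 0 then 𝒥 ≠ ∅. -/
/-- For a decreasing, exhaustive, chain-separated multifiltration
on a finite dimensional vector space, `E = Σ_{j ∈ 𝒥} F^j E` where `𝒥` is the
set of jump points; in particular if `E ≠ 0` then `𝒥 ≠ ∅`. -/
theorem sum_over_jump_points {k : Type*} [Field k] {A : Type*} [AddCommGroup A]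
    [AddGroup.FG A] (C : AddSubmonoid A)
    {E : Type*} [AddCommGroup E] [Module k E] [FiniteDimensional k E]
    (F : A → Submodule k E) (hF : mfIsFilt C F)
    (hex : mfExhaustive F) (hcs : mfChainSeparated C F) :
    (⨆ (l : A) (_ : mfJump C F l), F l) = ⊤ ∧
    ((⊤ : Submodule k E) ≠ ⊥ → ∃ l : A, mfJump C F l) := by
  classical
  set J : Submodule k E := ⨆ (l : A) (_ : mfJump C F l), F l with hJ
  have key : ∀ l, F l ≤ J := by
    by_contra h
    push_neg at h
    obtain ⟨l0, hl0⟩ := h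
    have step : ∀ l, ¬ F l ≤ J → ∃ m, (m - l ∈ C ∧ l - m ∉ C) ∧ ¬ F m ≤ J := by
      intro l hl
      by_contra hc
      push_neg at hc
      have hnj : ¬ mfJump C F l := by
        intro hj
        exact hl (le_iSup₂_of_le l hj le_rfl)
      unfold mfJump at hnj
      push_neg at hnj
      have h2 : (⨆ (m : A) (_ : m - l ∈ C ∧ l - m ∉ C), F m) ≤ J :=
        iSup₂_le fun m hm => hc m hm
      exact hl (hnj.trans h2)
    choose f hf1 hf2 using fun (p : {l : A // ¬ F l ≤ J}) => step p.1 p.2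
    let seq : ℕ → {l : A // ¬ F l ≤ J} :=
      fun n => Nat.rec ⟨l0, hl0⟩ (fun _ p => ⟨f p, hf2 p⟩) n
    obtain ⟨i₀, hi₀⟩ := hcs (fun n => (seq n).1) (fun i => hf1 (seq i))
    exact (seq i₀).2 (by rw [hi₀ i₀ le_rfl]; exact bot_le)
  have hJtop : J = ⊤ := le_antisymm le_top (by rw [← hex]; exact iSup_le key)
  refine ⟨hJtop, fun hne => ?_⟩
  by_contra hno
  push_neg at hno
  have : J = ⊥ := by
    rw [hJ]
    simp [hno]
  exact hne (hJtop ▸ this)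
end

section
/- Let (A,C) be a preordered finitely generated abelian group with C a polyhedral generating strict cone, and (E,F) a finite dimensional vector space with a separated decreasing multifiltration indexed by (A,C). Then the set of jump points of F is finite. Conversely, if C is generating, F is chain-separated, and F has only finitely many jump points, then F is separated. -/
set_option linter.unusedSectionVars false
set_option linter.unusedVariables false

section PartA

variable {A : Type*} [AddCommGroup A] {k E : Type*} [Field k] [AddCommGroup E] [Module k E]

/-- Every piece of a chain-separated multifiltration is spanned by the pieces at jump
points above it. -/
theorem mfLemmaA (C : AddSubmonoid A) (F : A → Submodule k E)
    (hCS : mfChainSeparated C F) (l : A) :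
    F l ≤ ⨆ (j : A) (_ : mfJump C F j ∧ j - l ∈ C), F j := by
  by_contra hcon
  set G : A → Submodule k E := fun a => ⨆ (j : A) (_ : mfJump C F j ∧ j - a ∈ C), F j with hG
  have hGmono : ∀ a b : A, b - a ∈ C → G b ≤ G a := by
    intro a b hba
    refine iSup₂_le fun j hj => ?_
    refine le_iSup₂ (f := fun (j : A) (_ : mfJump C F j ∧ j - a ∈ C) => F j) j ⟨hj.1, ?_⟩
    have := C.add_mem hj.2 hba
    rwa [sub_add_sub_cancel] at this
  have step : ∀ a : A, ¬ F a ≤ G a → ∃ b : A, (b - a ∈ C ∧ a - b ∉ C) ∧ ¬ F b ≤ G b := by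
    intro a ha
    by_contra hno
    push_neg at hno
    have hnj : ¬ mfJump C F a := fun hj => ha <|
      le_iSup₂ (f := fun (j : A) (_ : mfJump C F j ∧ j - a ∈ C) => F j) a
        ⟨hj, by simpa using C.zero_mem⟩
    rw [mfJump, not_not] at hnj
    refine ha (hnj.trans ?_)
    refine iSup₂_le fun m hm => ?_
    exact (hno m hm).trans (hGmono a m hm.1)
  have hstep' : ∀ t : {a : A // ¬ F a ≤ G a},
      ∃ t' : {a : A // ¬ F a ≤ G a}, (t'.1 - t.1 ∈ C ∧ t.1 - t'.1 ∉ C) := by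
    intro t
    obtain ⟨b, hb1, hb2⟩ := step t.1 t.2
    exact ⟨⟨b, hb2⟩, hb1⟩
  choose nxt hnxt using hstep'
  let seq : ℕ → {a : A // ¬ F a ≤ G a} := fun nn => Nat.rec ⟨l, hcon⟩ (fun _ t => nxt t) nn
  obtain ⟨i₀, hi₀⟩ := hCS (fun nn => (seq nn).1) (fun i => hnxt (seq i))
  exact (seq i₀).2 (by rw [hi₀ i₀ le_rfl]; exact bot_le)

/-- A directed group has upper bounds for finite sets. -/
theorem mfExistsUpper (C : AddSubmonoid A)
    (hgen : ∀ a : A, ∃ x ∈ C, ∃ y ∈ C, a = x - y) (s : Finset A) :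
    ∃ w : A, ∀ a ∈ s, w - a ∈ C := by
  classical
  induction s using Finset.induction_on with
  | empty => exact ⟨0, by simp⟩
  | @insert a s _ ih =>
    obtain ⟨w, hw⟩ := ih
    obtain ⟨x, hx, y, hy, hxy⟩ := hgen (a - w)
    refine ⟨a + y, fun b hb => ?_⟩
    rcases Finset.mem_insert.mp hb with rfl | hbs
    · simpa using hy
    · have h1 : a + y - w = x := by
        have h3 : (a + y - w) - x = (a - w) - (x - y) := by abel
        rw [hxy, sub_self] at h3
        exact sub_eq_zero.mp h3
      have := C.add_mem (h1 ▸ hx) (hw b hbs)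
      rwa [sub_add_sub_cancel] at this

/-- Direction 2 of the main theorem. -/
theorem mfDir2 (C : AddSubmonoid A)
    (hgen : ∀ a : A, ∃ x ∈ C, ∃ y ∈ C, a = x - y)
    (F : A → Submodule k E)
    (hCS : mfChainSeparated C F) (hJfin : {l : A | mfJump C F l}.Finite) :
    mfSeparated C F := by
  classical
  intro 𝒦 hempty
  by_cases hcase : ∀ K ∈ 𝒦, ∃ j : A, mfJump C F j ∧ j ∈ mfTilde C K
  · exfalso
    obtain ⟨w, hw⟩ := mfExistsUpper C hgen hJfin.toFinset
    have hmem : w ∈ ⋂ K ∈ 𝒦, mfTilde C K := by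
      refine Set.mem_biInter fun K hK => ?_
      obtain ⟨j, hj, m, hm, hjm⟩ := hcase K hK
      refine ⟨m, hm, ?_⟩
      have := C.add_mem (hw j (hJfin.mem_toFinset.mpr hj)) hjm
      rwa [sub_add_sub_cancel] at this
    rw [hempty] at hmem
    exact hmem
  · push_neg at hcase
    obtain ⟨K₀, hK₀, hnoj⟩ := hcase
    have hbot : mfPiece F K₀ = ⊥ := by
      rw [mfPiece]
      refine le_bot_iff.mp (iSup₂_le fun l hl => ?_)
      refine le_trans (mfLemmaA C F hCS l) ?_
      refine iSup₂_le fun j hj => ?_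
      exact absurd (⟨l, hl, hj.2⟩ : j ∈ mfTilde C K₀) (hnoj j hj.1)
    refine le_bot_iff.mp (le_trans ?_ hbot.le)
    exact biInf_le _ hK₀

end PartA

section PartB

variable {V : Type*} [AddCommGroup V] [Module ℚ V]

/-- The summation map as a `ℤ`-linear map. -/
noncomputable def psiMap {n : ℕ} (w : Fin n → V) : (Fin n → ℚ) →ₗ[ℤ] V where
  toFun f := ∑ i, f i • w i
  map_add' f g := by simp [add_smul, Finset.sum_add_distrib]
  map_smul' z f := by simp [Finset.smul_sum, ← smul_assoc, zsmul_eq_mul]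

theorem psiMap_apply {n : ℕ} (w : Fin n → V) (f : Fin n → ℚ) :
    psiMap w f = ∑ i, f i • w i := rfl

/-- A submodule contained in a f.g. submodule of a `ℤ`-module is f.g. -/
theorem fg_of_le_fg {R M : Type*} [Ring R] [IsNoetherianRing R] [AddCommGroup M]
    [Module R M] {p q : Submodule R M}
    (hq : q.FG) (hpq : p ≤ q) : p.FG := by
  haveI := isNoetherian_of_fg_of_noetherian q hq
  have h1 : (p.comap q.subtype).FG := IsNoetherian.noetherian _
  have h2 := h1.map q.subtype
  rwa [Submodule.map_comap_subtype, inf_eq_right.mpr hpq] at h2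

/-- Denominator bound for coefficients on a linearly independent subfamily. -/
theorem denom_bound {A : Type*} [AddCommGroup A] [AddGroup.FG A] {n : ℕ}
    (ι : A →ₗ[ℤ] V) (w : Fin n → V) (B : Finset (Fin n))
    (hB : LinearIndependent ℚ (fun b : ↥B => w ↑b)) :
    ∃ N : ℕ, 0 < N ∧ ∀ (a : A) (f : Fin n → ℚ), (∀ i ∉ B, f i = 0) →
      ι a = ∑ i, f i • w i → ∀ i, ∃ z : ℤ, f i * N = z := by
  classical
  set ψ := psiMap w with hψ
  set G : Submodule ℤ (Fin n → ℚ) :=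
    { carrier := {f | (∀ i ∉ B, f i = 0) ∧ ψ f ∈ LinearMap.range ι}
      add_mem' := by
        rintro f g ⟨hf1, hf2⟩ ⟨hg1, hg2⟩
        exact ⟨fun i hi => by simp [hf1 i hi, hg1 i hi],
          by rw [map_add]; exact add_mem hf2 hg2⟩
      zero_mem' := ⟨fun i _ => rfl, by rw [map_zero]; exact zero_mem _⟩
      smul_mem' := by
        rintro z f ⟨hf1, hf2⟩
        exact ⟨fun i hi => by simp [hf1 i hi],
          by rw [map_smul]; exact Submodule.smul_mem _ z hf2⟩ } with hGdef
  have hGfg : G.FG := by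
    apply Submodule.fg_of_fg_map_of_fg_inf_ker ψ
    · refine fg_of_le_fg (q := LinearMap.range ι) ?_ ?_
      · have hfin : Module.Finite ℤ A := Module.Finite.iff_addGroup_fg.mpr ‹_›
        have htop : (⊤ : Submodule ℤ A).FG := Module.finite_def.mp hfin
        simpa [Submodule.map_top] using htop.map ι
      · rintro v ⟨f, hf, rfl⟩
        exact hf.2
    · have hker : G ⊓ LinearMap.ker ψ = ⊥ := by
        refine le_antisymm ?_ bot_le
        rintro f ⟨hfG, hfk⟩
        have hsum : ∑ b : ↥B, f ↑b • w ↑b = 0 := by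
          have h0 : ∑ i, f i • w i = 0 := hfk
          rw [← h0]
          rw [Finset.sum_coe_sort B (fun i => f i • w i)]
          refine Finset.sum_subset (Finset.subset_univ B) ?_
          intro x _ hx
          rw [hfG.1 x hx, zero_smul]
        have hzero := Fintype.linearIndependent_iff.mp hB (fun b => f ↑b) hsum
        have : f = 0 := by
          funext i
          by_cases hi : i ∈ B
          · exact hzero ⟨i, hi⟩
          · exact hfG.1 i hi
        simp [this]
      rw [hker]
      exact Submodule.fg_bot
  obtain ⟨S, hS⟩ := hGfg
  refine ⟨∏ q ∈ S, ∏ i, (q i).den, ?_, ?_⟩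
  · exact Finset.prod_pos fun q _ => Finset.prod_pos fun i _ => (q i).pos
  · set N : ℕ := ∏ q ∈ S, ∏ i, (q i).den with hN
    set T : Submodule ℤ (Fin n → ℚ) :=
      { carrier := {f | ∀ i, ∃ z : ℤ, f i * N = z}
        add_mem' := by
          rintro f g hf hg i
          obtain ⟨z1, hz1⟩ := hf i
          obtain ⟨z2, hz2⟩ := hg i
          exact ⟨z1 + z2, by push_cast; rw [Pi.add_apply, add_mul, hz1, hz2]⟩
        zero_mem' := fun i => ⟨0, by simp⟩
        smul_mem' := by
          rintro z f hf i
          obtain ⟨z1, hz1⟩ := hf i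
          refine ⟨z * z1, ?_⟩
          push_cast
          rw [Pi.smul_apply, zsmul_eq_mul, mul_assoc, hz1] } with hT
    have hST : (S : Set (Fin n → ℚ)) ⊆ T := by
      intro q hq i
      have hdvd : ((q i).den : ℕ) ∣ N := by
        refine dvd_trans (Finset.dvd_prod_of_mem (fun j => (q j).den) (Finset.mem_univ i)) ?_
        exact Finset.dvd_prod_of_mem (fun r => ∏ j, (r j).den) hq
      obtain ⟨m, hm⟩ := hdvd
      refine ⟨(q i).num * m, ?_⟩
      rw [hm]
      push_cast
      rw [← mul_assoc]
      congr 1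
      exact_mod_cast Rat.mul_den_eq_num (q i)
    have hGT : G ≤ T := by
      rw [← hS]
      exact Submodule.span_le.mpr hST
    intro a f hsupp hrep i
    have hfG : f ∈ G := ⟨hsupp, ⟨a, hrep⟩⟩
    exact hGT hfG i

end PartB

section PartC

variable {V : Type*} [AddCommGroup V] [Module ℚ V]

/-- Every nonnegative combination can be rewritten as a nonnegative combination supported
on a linearly independent subfamily. -/
theorem exists_linIndep_rep {n : ℕ} (w : Fin n → V) (f : Fin n → ℚ) (hf : ∀ i, 0 ≤ f i) :
    ∃ (B : Finset (Fin n)) (f' : Fin n → ℚ), (∀ i, 0 ≤ f' i) ∧ (∀ i ∉ B, f' i = 0) ∧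
      (∑ i, f' i • w i = ∑ i, f i • w i) ∧ LinearIndependent ℚ (fun b : ↥B => w ↑b) := by
  classical
  suffices H : ∀ (m : ℕ) (f : Fin n → ℚ), (Finset.univ.filter fun i => f i ≠ 0).card ≤ m →
      (∀ i, 0 ≤ f i) →
      ∃ (B : Finset (Fin n)) (f' : Fin n → ℚ), (∀ i, 0 ≤ f' i) ∧ (∀ i ∉ B, f' i = 0) ∧
        (∑ i, f' i • w i = ∑ i, f i • w i) ∧ LinearIndependent ℚ (fun b : ↥B => w ↑b) by
    exact H (Finset.univ.filter fun i => f i ≠ 0).card f le_rfl hf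
  intro m
  induction m with
  | zero =>
    intro f hcard hf0
    have hall : ∀ i, f i = 0 := by
      intro i
      by_contra hne
      have hmem : i ∈ Finset.univ.filter fun i => f i ≠ 0 :=
        Finset.mem_filter.mpr ⟨Finset.mem_univ i, hne⟩
      have := Finset.card_pos.mpr ⟨i, hmem⟩
      omega
    refine ⟨∅, f, hf0, fun i _ => hall i, rfl, ?_⟩
    haveI : IsEmpty ↥(∅ : Finset (Fin n)) := by
      rw [Finset.isEmpty_coe_sort]
    exact linearIndependent_empty_type
  | succ m ih =>
    intro f hcard hf0
    set Bf := Finset.univ.filter fun i => f i ≠ 0 with hBf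
    have hBfsupp : ∀ i, i ∉ Bf → f i = 0 := by
      intro i hi
      by_contra hne
      exact hi (Finset.mem_filter.mpr ⟨Finset.mem_univ i, hne⟩)
    by_cases hli : LinearIndependent ℚ (fun b : ↥Bf => w ↑b)
    · exact ⟨Bf, f, hf0, hBfsupp, rfl, hli⟩
    · obtain ⟨t, ht, b₀, hb₀⟩ := Fintype.not_linearIndependent_iff.mp hli
      set tt : Fin n → ℚ := fun i => if h : i ∈ Bf then t ⟨i, h⟩ else 0 with htt
      have httsupp : ∀ i, i ∉ Bf → tt i = 0 := fun i hi => by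
        rw [htt]; exact dif_neg hi
      have httsum : ∑ i, tt i • w i = 0 := by
        have h1 : ∑ i ∈ Bf, tt i • w i = ∑ i, tt i • w i :=
          Finset.sum_subset (Finset.subset_univ Bf) fun x _ hx => by
            rw [httsupp x hx, zero_smul]
        have h2 : ∑ i ∈ Bf, tt i • w i = ∑ b : ↥Bf, t b • w ↑b := by
          rw [← Finset.sum_coe_sort Bf (fun i => tt i • w i)]
          refine Finset.sum_congr rfl fun b _ => ?_
          have hbt : tt ↑b = t b := by
            rw [htt]
            simp only []
            rw [dif_pos b.2]
          rw [hbt]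
        rw [← h1, h2, ht]
      -- normalize sign: find s with a positive entry
      obtain ⟨s, hssum, hssupp, hspos⟩ :
          ∃ s : Fin n → ℚ, (∑ i, s i • w i = 0) ∧ (∀ i, i ∉ Bf → s i = 0) ∧ (∃ i, 0 < s i) := by
        by_cases hpos : ∃ i, 0 < tt i
        · exact ⟨tt, httsum, httsupp, hpos⟩
        · push_neg at hpos
          refine ⟨-tt, by simp [httsum], fun i hi => by simp [httsupp i hi], ⟨↑b₀, ?_⟩⟩
          have hne : tt ↑b₀ ≠ 0 := by
            have hbt : tt ↑b₀ = t b₀ := by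
              rw [htt]
              simp only []
              rw [dif_pos b₀.2]
            rw [hbt]; exact hb₀
          have := hpos ↑b₀
          simp only [Pi.neg_apply]
          exact neg_pos.mpr (lt_of_le_of_ne this hne)
      have hsBf : ∀ i, s i ≠ 0 → i ∈ Bf := by
        intro i h
        by_contra hc
        exact h (hssupp i hc)
      set P := Bf.filter fun i => 0 < s i with hP
      have hPne : P.Nonempty := by
        obtain ⟨i, hi⟩ := hspos
        exact ⟨i, Finset.mem_filter.mpr ⟨hsBf i hi.ne', hi⟩⟩
      obtain ⟨i₀, hi₀P, hmin⟩ := Finset.exists_min_image P (fun i => f i / s i) hPne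
      have hsi₀ : 0 < s i₀ := (Finset.mem_filter.mp hi₀P).2
      set sv := f i₀ / s i₀ with hsv
      have hsv0 : 0 ≤ sv := div_nonneg (hf0 i₀) hsi₀.le
      set f'' : Fin n → ℚ := fun i => f i - sv * s i with hf''
      have hnneg : ∀ i, 0 ≤ f'' i := by
        intro i
        rw [hf'']
        simp only []
        by_cases hp : 0 < s i
        · have hiP : i ∈ P := Finset.mem_filter.mpr ⟨hsBf i hp.ne', hp⟩
          have h1 : sv ≤ f i / s i := hmin i hiP
          have h2 : sv * s i ≤ f i := (le_div_iff₀ hp).mp h1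
          linarith
        · have h1 : s i ≤ 0 := not_lt.mp hp
          have h2 : sv * s i ≤ 0 := mul_nonpos_of_nonneg_of_nonpos hsv0 h1
          have := hf0 i
          linarith
      have hsum : ∑ i, f'' i • w i = ∑ i, f i • w i := by
        have h1 : ∀ i, f'' i • w i = f i • w i - sv • (s i • w i) := by
          intro i
          rw [hf'']
          simp only []
          rw [sub_smul, smul_smul]
        calc ∑ i, f'' i • w i = ∑ i, (f i • w i - sv • (s i • w i)) :=
              Finset.sum_congr rfl fun i _ => h1 i
          _ = ∑ i, f i • w i - sv • ∑ i, s i • w i := by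
              rw [Finset.sum_sub_distrib, Finset.smul_sum]
          _ = ∑ i, f i • w i := by rw [hssum, smul_zero, sub_zero]
      have hsub : (Finset.univ.filter fun i => f'' i ≠ 0) ⊆ Bf.erase i₀ := by
        intro i hi
        have hne : f'' i ≠ 0 := (Finset.mem_filter.mp hi).2
        refine Finset.mem_erase.mpr ⟨?_, ?_⟩
        · rintro rfl
          apply hne
          rw [hf'']
          simp only []
          rw [hsv, div_mul_cancel₀ _ hsi₀.ne', sub_self]
        · by_contra hc
          apply hne
          rw [hf'']
          simp only []
          rw [hBfsupp i hc, hssupp i hc, mul_zero, sub_zero]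
      have hcard' : (Finset.univ.filter fun i => f'' i ≠ 0).card ≤ m := by
        have h1 := Finset.card_le_card hsub
        have h2 : i₀ ∈ Bf := (Finset.mem_filter.mp hi₀P).1
        have h3 := Finset.card_erase_of_mem h2
        omega
      obtain ⟨B, f', hB1, hB2, hB3, hB4⟩ := ih f'' hcard' hnneg
      exact ⟨B, f', hB1, hB2, hB3.trans hsum, hB4⟩

end PartC

section PartD

variable {V : Type*} [AddCommGroup V] [Module ℚ V]

/-- Every element of `A` mapping into the cone `D` has a representation with a
uniformly bounded denominator. -/
theorem key_rep {A : Type*} [AddCommGroup A] [AddGroup.FG A] {n : ℕ}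
    (ι : A →ₗ[ℤ] V) (g : Fin n → A) (D : Set V)
    (hD : D = {v : V | ∃ f : Fin n → ℚ, (∀ i, 0 ≤ f i) ∧ v = ∑ i, f i • ι (g i)}) :
    ∃ N : ℕ, 0 < N ∧ ∀ a : A, ι a ∈ D → ∃ u : Fin n → ℕ,
      ι a = ∑ i, ((u i : ℚ) / N) • ι (g i) := by
  classical
  set w : Fin n → V := fun i => ι (g i) with hw
  have hNB : ∀ B : Finset (Fin n), ∃ N : ℕ, 0 < N ∧
      (LinearIndependent ℚ (fun b : ↥B => w ↑b) → ∀ (a : A) (f : Fin n → ℚ),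
        (∀ i ∉ B, f i = 0) → ι a = ∑ i, f i • w i → ∀ i, ∃ z : ℤ, f i * N = z) := by
    intro B
    by_cases h : LinearIndependent ℚ (fun b : ↥B => w ↑b)
    · obtain ⟨N, hN, hprop⟩ := denom_bound ι w B h
      exact ⟨N, hN, fun _ => hprop⟩
    · exact ⟨1, one_pos, fun hh => absurd hh h⟩
  choose NB hNBpos hNBprop using hNB
  refine ⟨∏ B : Finset (Fin n), NB B, Finset.prod_pos fun B _ => hNBpos B, ?_⟩
  intro a ha
  rw [hD] at ha
  obtain ⟨f0, hf0, hrep0⟩ := ha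
  obtain ⟨B, f, hfnn, hfsupp, hfsum, hfli⟩ := exists_linIndep_rep w f0 hf0
  have hrep : ι a = ∑ i, f i • w i := by rw [hfsum]; exact hrep0
  have hint := hNBprop B hfli a f hfsupp hrep
  set N : ℕ := ∏ B : Finset (Fin n), NB B with hN
  have hNpos : 0 < N := Finset.prod_pos fun B _ => hNBpos B
  have hNne : (N : ℚ) ≠ 0 := by positivity
  obtain ⟨M, hM⟩ : NB B ∣ N := Finset.dvd_prod_of_mem _ (Finset.mem_univ B)
  have hu : ∀ i, ∃ uu : ℕ, f i = (uu : ℚ) / N := by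
    intro i
    obtain ⟨z, hz⟩ := hint i
    have h1 : f i * (N : ℚ) = (z : ℚ) * (M : ℚ) := by
      rw [hM]
      push_cast
      rw [← mul_assoc, hz]
    have h2 : (0 : ℚ) ≤ (z : ℚ) * (M : ℚ) := by
      rw [← h1]
      have := hfnn i
      positivity
    have h3 : (0 : ℤ) ≤ z * M := by exact_mod_cast h2
    refine ⟨(z * M).toNat, ?_⟩
    have h4 : (((z * M).toNat : ℤ) : ℚ) = ((z * M : ℤ) : ℚ) := by
      rw [Int.toNat_of_nonneg h3]
    rw [eq_div_iff hNne, h1]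
    rw [Int.cast_natCast] at h4
    rw [h4]
    push_cast
    ring
  choose uu huu using hu
  refine ⟨uu, ?_⟩
  rw [hrep]
  exact Finset.sum_congr rfl fun i _ => by rw [huu i]

/-- Differences of dominated representations stay in the cone. -/
theorem sub_mem_D {A : Type*} [AddCommGroup A] {n : ℕ}
    (ι : A →ₗ[ℤ] V) (g : Fin n → A) (D : Set V)
    (hD : D = {v : V | ∃ f : Fin n → ℚ, (∀ i, 0 ≤ f i) ∧ v = ∑ i, f i • ι (g i)})
    (N : ℕ) (u u' : Fin n → ℕ) (h : ∀ i, u i ≤ u' i) :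
    (∑ i, ((u' i : ℚ) / N) • ι (g i)) - (∑ i, ((u i : ℚ) / N) • ι (g i)) ∈ D := by
  rw [hD]
  refine ⟨fun i => (((u' i : ℚ)) - (u i : ℚ)) / N, fun i =>
    div_nonneg (sub_nonneg.mpr (by exact_mod_cast h i)) (Nat.cast_nonneg N), ?_⟩
  rw [← Finset.sum_sub_distrib]
  exact Finset.sum_congr rfl fun i _ => by rw [← sub_smul, ← sub_div]

end PartD

section PartE

variable {A : Type*} [AddCommGroup A] {k E : Type*} [Field k] [AddCommGroup E] [Module k E]

theorem le_mfPiece (F : A → Submodule k E) {K : Set A} {l : A} (hl : l ∈ K) :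
    F l ≤ mfPiece F K :=
  le_iSup₂ (f := fun (l : A) (_ : l ∈ K) => F l) l hl

theorem mfPiece_mono (F : A → Submodule k E) {K K' : Set A} (h : K ⊆ K') :
    mfPiece F K ≤ mfPiece F K' :=
  iSup₂_le fun l hl => le_mfPiece F (h hl)

/-- Direction 1 of the main theorem. -/
theorem mfDir1 {V : Type*} [AddCommGroup V] [Module ℚ V] [AddGroup.FG A]
    [FiniteDimensional k E]
    (ι : A →ₗ[ℤ] V) (C : AddSubmonoid A) (D : Set V)
    (hC : (C : Set A) = ι ⁻¹' D)
    (F : A → Submodule k E) (hF : mfIsFilt C F)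
    {n : ℕ} {g : Fin n → A}
    (hD : D = {v : V | ∃ f : Fin n → ℚ, (∀ i, 0 ≤ f i) ∧ v = ∑ i, f i • ι (g i)})
    (hstrict : ∀ a ∈ C, -a ∈ C → a = 0)
    (hSep : mfSeparated C F) : {l : A | mfJump C F l}.Finite := by
  classical
  by_contra hinf
  have hinf' : {l : A | mfJump C F l}.Infinite := hinf
  let e := hinf'.natEmbedding
  set lam : ℕ → A := fun i => ↑(e i) with hlam
  have hlamJ : ∀ i, mfJump C F (lam i) := fun i => (e i).2
  have hlaminj : Function.Injective lam := fun i j h => e.injective (Subtype.ext h)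
  set Kf : ℕ → Set A := fun nn => lam '' Set.Ici nn with hKf
  set W : ℕ → Submodule k E := fun nn => mfPiece F (Kf nn) with hW
  have hWanti : ∀ nn mm, nn ≤ mm → W mm ≤ W nn := fun nn mm h =>
    mfPiece_mono F (Set.image_mono (f := lam) (Set.Ici_subset_Ici.mpr h))
  have hFW : ∀ nn, F (lam nn) ≤ W nn := fun nn =>
    le_mfPiece F ⟨nn, Set.mem_Ici.mpr le_rfl, rfl⟩
  have hFne : ∀ i, F (lam i) ≠ ⊥ := by
    intro i h
    exact hlamJ i (by rw [h]; exact bot_le)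
  -- stabilization of the pieces
  have hRne : (Set.range fun nn => Module.finrank k (W nn)).Nonempty := ⟨_, ⟨0, rfl⟩⟩
  obtain ⟨n₀, hn₀⟩ := Nat.sInf_mem hRne
  have hWstab : ∀ mm, W n₀ ≤ W mm := by
    intro mm
    rcases le_total mm n₀ with h | h
    · exact hWanti mm n₀ h
    · have h1 : W mm ≤ W n₀ := hWanti n₀ mm h
      have h2 : Module.finrank k (W n₀) ≤ Module.finrank k (W mm) := by
        have := hn₀
        simp only [] at this
        rw [this]
        exact Nat.sInf_le ⟨mm, rfl⟩
      exact (Submodule.eq_of_le_of_finrank_le h1 h2).ge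
  have hIne : (⨅ K ∈ Set.range Kf, mfPiece F K) ≠ ⊥ := by
    have heq : (⨅ K ∈ Set.range Kf, mfPiece F K) = ⨅ nn, W nn := by
      rw [iInf_range]
    rw [heq]
    intro hbot
    apply hFne n₀
    refine le_bot_iff.mp ?_
    calc F (lam n₀) ≤ W n₀ := hFW n₀
      _ ≤ ⨅ nn, W nn := le_iInf hWstab
      _ = ⊥ := hbot
  have hInonempty : (⋂ K ∈ Set.range Kf, mfTilde C K) ≠ ∅ := fun h => hIne (hSep _ h)
  obtain ⟨v, hv⟩ := Set.nonempty_iff_ne_empty.mpr hInonempty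
  have hv' : ∀ nn : ℕ, ∃ i, nn ≤ i ∧ v - lam i ∈ C := by
    intro nn
    have hvn : v ∈ mfTilde C (Kf nn) := Set.mem_iInter₂.mp hv (Kf nn) ⟨nn, rfl⟩
    obtain ⟨m, ⟨i, hi, rfl⟩, hc⟩ := hvn
    exact ⟨i, hi, hc⟩
  set I : Set ℕ := {i | v - lam i ∈ C} with hI
  have hIinf : I.Infinite := by
    intro hfin
    obtain ⟨b, hb⟩ := hfin.bddAbove
    obtain ⟨i, hi1, hi2⟩ := hv' (b + 1)
    have := hb hi2
    omega
  let e2 := hIinf.natEmbedding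
  obtain ⟨N, hNpos, hkey⟩ := key_rep ι g D hD
  have hrepall : ∀ j : ℕ, ∃ u : Fin n → ℕ,
      ι (v - lam ↑(e2 j)) = ∑ i, ((u i : ℚ) / N) • ι (g i) := by
    intro j
    apply hkey
    have hc : (v - lam ↑(e2 j)) ∈ (C : Set A) := (e2 j).2
    rw [hC] at hc
    exact hc
  choose u hu using hrepall
  have hpwo : (Set.univ : Set (Fin n → ℕ)).IsPWO :=
    Set.isPWO_of_wellQuasiOrderedLE Set.univ
  obtain ⟨gmo, hgmo⟩ := hpwo.exists_monotone_subseq (f := u) (fun _ => Set.mem_univ _)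
  set μ : ℕ → A := fun t => lam ↑(e2 (gmo t)) with hμ
  have hμJ : ∀ t, mfJump C F (μ t) := fun t => hlamJ _
  have hμinj : Function.Injective μ := fun s t h =>
    gmo.injective (e2.injective (Subtype.ext (hlaminj h)))
  have hcomp : ∀ s t : ℕ, s ≤ t → μ s - μ t ∈ C := by
    intro s t hst
    have hle : u (gmo s) ≤ u (gmo t) := hgmo hst
    have hmem : ι (μ s - μ t) ∈ D := by
      have heq : ι (μ s - μ t) = (∑ i, ((u (gmo t) i : ℚ) / N) • ι (g i)) -
          (∑ i, ((u (gmo s) i : ℚ) / N) • ι (g i)) := by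
        rw [← hu (gmo t), ← hu (gmo s), ← map_sub]
        congr 1
        abel
      rw [heq]
      exact sub_mem_D ι g D hD N (u (gmo s)) (u (gmo t)) (fun i => hle i)
    have hfin : μ s - μ t ∈ (C : Set A) := by rw [hC]; exact hmem
    exact hfin
  have hstrictord : ∀ s t : ℕ, s < t → μ t - μ s ∉ C := by
    intro s t hst hmem
    have h1 := hcomp s t hst.le
    have h2 : -(μ s - μ t) ∈ C := by rw [neg_sub]; exact hmem
    exact hμinj.ne hst.ne (sub_eq_zero.mp (hstrict _ h1 h2))
  have hlt : ∀ t : ℕ, F (μ t) < F (μ (t + 1)) := by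
    intro t
    have hle : F (μ t) ≤ F (μ (t + 1)) := hF (μ (t + 1)) (μ t) (hcomp t (t + 1) (Nat.le_succ t))
    refine lt_of_le_of_ne hle ?_
    intro heq2
    apply hμJ (t + 1)
    rw [← heq2]
    exact le_iSup₂ (f := fun (m : A) (_ : m - μ (t + 1) ∈ C ∧ μ (t + 1) - m ∉ C) => F m) (μ t)
      ⟨hcomp t (t + 1) (Nat.le_succ t), hstrictord t (t + 1) (Nat.lt_succ_self t)⟩
  have hmono : StrictMono fun t => Module.finrank k (F (μ t)) :=
    strictMono_nat_of_lt_succ fun t => Submodule.finrank_lt_finrank_of_lt (hlt t)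
  have h1 := hmono.le_apply (x := Module.finrank k E + 1)
  have h2 : Module.finrank k (F (μ (Module.finrank k E + 1))) ≤ Module.finrank k E :=
    Submodule.finrank_le _
  omega

end PartE

/-- For `C = ι⁻¹(D)` a generating cone: if `D` is rational
polyhedral and `C` is strict, a separated multifiltration has finitely many
jump points; conversely a chain-separated multifiltration with finitely many
jump points is separated. -/


theorem jump_points_finite_iff_separated {k : Type*} [Field k] {A : Type*}
    [AddCommGroup A] [AddGroup.FG A]
    (V : Type*) [AddCommGroup V] [Module ℚ V]
    (ι : A →ₗ[ℤ] V) [IsLocalizedModule (nonZeroDivisors ℤ) ι]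
    (C : AddSubmonoid A) (D : Set V)
    (hDconv : Convex ℚ D) (hDcone : ∀ v ∈ D, ∀ q : ℚ, 0 ≤ q → q • v ∈ D)
    (hC : (C : Set A) = ι ⁻¹' D)
    (hgen : ∀ a : A, ∃ x ∈ C, ∃ y ∈ C, a = x - y)
    {E : Type*} [AddCommGroup E] [Module k E] [FiniteDimensional k E]
    (F : A → Submodule k E) (hF : mfIsFilt C F) :
    ((∃ (n : ℕ) (g : Fin n → A),
        D = {v : V | ∃ f : Fin n → ℚ, (∀ i, 0 ≤ f i) ∧ v = ∑ i, f i • ι (g i)}) →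
      (∀ a ∈ C, -a ∈ C → a = 0) →
      mfSeparated C F → {l : A | mfJump C F l}.Finite) ∧
    (mfChainSeparated C F → {l : A | mfJump C F l}.Finite →
      mfSeparated C F) := by
  constructor
  · rintro ⟨n, g, hD⟩ hstrict hSep
    exact mfDir1 ι C D hC F hF hD hstrict hSep
  · intro hCS hJfin
    exact mfDir2 C hgen F hCS hJfin
end
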